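/- arXiv:2506.07415 — 3 statements merged into one kernel-verified Lean document; each statement's English description precedes it below -/
import Mathlib

section
/- Let b>0, α<1 and β ≥ 1/(1−α). Assume f satisfies (A1) and (A3) with exponent β, and g satisfies (A2) with exponent α. Then there exists L₀>0 such that for every L ≥ L₀ there exists c_L > 0 with lim_{L→∞} c_L = ∞ such that the function v_L defined by: v_L(x,t) := ((3b−x)/(2b) − c_L t)^{−L} for b−2bc_Lt ≤ x < b and 0 < t < 1/c_L; v_L(x,t) := 1 for −b < x < b−2bc_Lt and 0 ≤ t < 1/c_L; v_L(x,t) := ((b−x)/(2b))^{−L} for −b < x < b and t ≥ 1/c_L; satisfies (v_L)_t ≤ f((1/2)g((v_L)_x)(v_L)_{xx}) on (−b,b)×(0,∞) in the viscosity sense. -/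
open Filter Set Topology

noncomputable section

/-- The parabolic cylinder `Q = (-b,b) × (0,∞)`. -/
def Qset (b : ℝ) : Set (ℝ × ℝ) := Ioo (-b) b ×ˢ Ioi (0:ℝ)

/-- The cylinder `Q₀ = (-b,b) × [0,∞)`. -/
def Q0set (b : ℝ) : Set (ℝ × ℝ) := Ioo (-b) b ×ˢ Ici (0:ℝ)

/-- Partial derivative in time. -/
def pT (φ : ℝ × ℝ → ℝ) (p : ℝ × ℝ) : ℝ := deriv (fun t => φ (p.1, t)) p.2

/-- Partial derivative in space. -/
def pX (φ : ℝ × ℝ → ℝ) (p : ℝ × ℝ) : ℝ := deriv (fun x => φ (x, p.2)) p.1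

/-- Second partial derivative in space. -/
def pXX (φ : ℝ × ℝ → ℝ) (p : ℝ × ℝ) : ℝ := deriv (fun x => pX φ (x, p.2)) p.1

/-- (A1): `f` is continuous, strictly increasing, `f 0 = 0`, `f(s) → ±∞` as `s → ±∞`. -/
def A1 (f : ℝ → ℝ) : Prop :=
  Continuous f ∧ StrictMono f ∧ f 0 = 0 ∧ Tendsto f atTop atTop ∧ Tendsto f atBot atBot

/-- (A2) with exponent `α`: `g` is continuous, positive, and `|s|^α g(s)` has positive
limits as `s → ±∞`. -/
def A2 (g : ℝ → ℝ) (α : ℝ) : Prop :=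
  Continuous g ∧ (∀ s, 0 < g s) ∧
  ∃ Cgp Cgm : ℝ, 0 < Cgp ∧ 0 < Cgm ∧
    Tendsto (fun s => |s| ^ α * g s) atTop (𝓝 Cgp) ∧
    Tendsto (fun s => |s| ^ α * g s) atBot (𝓝 Cgm)

/-- (A3) with exponent `β > 0`: `|s|^(-β) f s → ±C_{f±}` as `s → ±∞`. -/
def A3 (f : ℝ → ℝ) (β : ℝ) : Prop :=
  0 < β ∧ ∃ Cfp Cfm : ℝ, 0 < Cfp ∧ 0 < Cfm ∧
    Tendsto (fun s => |s| ^ (-β) * f s) atTop (𝓝 Cfp) ∧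
    Tendsto (fun s => |s| ^ (-β) * f s) atBot (𝓝 (-Cfm))

/-- (B1): `u₀ ∈ C([-b,b])`. -/
def B1 (b : ℝ) (u0 : ℝ → ℝ) : Prop := ContinuousOn u0 (Icc (-b) b)

/-- (B2): `u₀ ∈ C((-b,b))`, diverging to `∞` at `±b` with polynomial rate bound. -/
def B2 (b : ℝ) (u0 : ℝ → ℝ) : Prop :=
  ContinuousOn u0 (Ioo (-b) b) ∧
  Tendsto u0 (𝓝[<] b) atTop ∧ Tendsto u0 (𝓝[>] (-b)) atTop ∧
  ∃ γ : ℝ, 0 < γ ∧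
    (∃ C : ℝ, ∀ᶠ x in 𝓝[<] b, u0 x * (b - x) ^ γ ≤ C) ∧
    (∃ C : ℝ, ∀ᶠ x in 𝓝[>] (-b), u0 x * (b + x) ^ γ ≤ C)

/-- `ψ_γ(s) = s^(-γ)` for `γ > 0` and `ψ₀(s) = -log s`. -/
def psi (γ : ℝ) (s : ℝ) : ℝ := if 0 < γ then s ^ (-γ) else -Real.log s

/-- (B3): `u₀ ∈ C((-b,b))` behaves like `D₊ ψ_{γ₊}(b-x)` near `b` and like
`D₋ ψ_{γ₋}(b+x)` near `-b`, up to constants. -/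
def B3 (b : ℝ) (u0 : ℝ → ℝ) (γp γm Dp Dm : ℝ) : Prop :=
  ContinuousOn u0 (Ioo (-b) b) ∧ 0 ≤ γp ∧ 0 ≤ γm ∧ 0 < Dp ∧ 0 < Dm ∧
  ∃ Cp Cm : ℝ,
    Tendsto (fun x => u0 x - Dp * psi γp (b - x)) (𝓝[<] b) (𝓝 Cp) ∧
    Tendsto (fun x => u0 x - Dm * psi γm (b + x)) (𝓝[>] (-b)) (𝓝 Cm)

/-- Viscosity sub-solution of `u_t - f(g(u_x) u_{xx}) = 0` in `Q`. -/
def IsSubSol (b : ℝ) (f g : ℝ → ℝ) (u : ℝ × ℝ → ℝ) : Prop :=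
  UpperSemicontinuousOn u (Q0set b) ∧
  ∀ φ : ℝ × ℝ → ℝ, ContDiffOn ℝ 2 φ (Qset b) →
    ∀ p ∈ Qset b, IsLocalMaxOn (fun q => u q - φ q) (Qset b) p →
      pT φ p - f (g (pX φ p) * pXX φ p) ≤ 0

/-- The singular Dirichlet boundary condition at time `t`:
`v(x,t) → ∞` as `x → ±b`. -/
def SingularBC (b : ℝ) (v : ℝ × ℝ → ℝ) (t : ℝ) : Prop :=
  Tendsto (fun x => v (x, t)) (𝓝[<] b) atTop ∧
  Tendsto (fun x => v (x, t)) (𝓝[>] (-b)) atTop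

/-- Viscosity super-solution of `u_t - f(g(u_x) u_{xx}) = 0` in `Q` together with the
singular Dirichlet boundary condition. -/
def IsSuperSol (b : ℝ) (f g : ℝ → ℝ) (v : ℝ × ℝ → ℝ) : Prop :=
  LowerSemicontinuousOn v (Q0set b) ∧
  (∀ φ : ℝ × ℝ → ℝ, ContDiffOn ℝ 2 φ (Qset b) →
    ∀ p ∈ Qset b, IsLocalMinOn (fun q => v q - φ q) (Qset b) p →
      0 ≤ pT φ p - f (g (pX φ p) * pXX φ p)) ∧
  (∀ t : ℝ, 0 < t → SingularBC b v t)

/-- Upper semicontinuous envelope relative to `Q₀`. -/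
def uscEnv (b : ℝ) (u : ℝ × ℝ → ℝ) (p : ℝ × ℝ) : ℝ := limsup u (𝓝[Q0set b] p)

/-- Lower semicontinuous envelope relative to `Q₀`. -/
def lscEnv (b : ℝ) (u : ℝ × ℝ → ℝ) (p : ℝ × ℝ) : ℝ := liminf u (𝓝[Q0set b] p)

/-- Viscosity solution of the initial value problem: `u*` is a sub-solution, `u_*` is a
super-solution (including the singular Dirichlet condition), and both envelopes agree
with `u₀` at `t = 0`. -/
def IsVSol (b : ℝ) (f g : ℝ → ℝ) (u0 : ℝ → ℝ) (u : ℝ × ℝ → ℝ) : Prop :=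
  IsSubSol b f g (uscEnv b u) ∧ IsSuperSol b f g (lscEnv b u) ∧
  ∀ x ∈ Ioo (-b) b, uscEnv b u (x, 0) = u0 x ∧ lscEnv b u (x, 0) = u0 x

/-- The explicit piecewise sub-solution of Definition 4.7. -/
def subVL (b L c : ℝ) (q : ℝ × ℝ) : ℝ :=
  if 1 / c ≤ q.2 then ((b - q.1) / (2 * b)) ^ (-L)
  else if b - 2 * b * c * q.2 ≤ q.1 then ((3 * b - q.1) / (2 * b) - c * q.2) ^ (-L)
  else 1


/-- One-sided derivative bound: local max from the left gives nonneg derivative. -/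
lemma aux_left_max_deriv_nonneg {h : ℝ → ℝ} {a d : ℝ} (hd : HasDerivAt h d a)
    (hm : ∀ᶠ t in 𝓝[≤] a, h t ≤ h a) : 0 ≤ d := by
  have hs : Tendsto (slope h a) (𝓝[≠] a) (𝓝 d) := hasDerivAt_iff_tendsto_slope.1 hd
  have hs' : Tendsto (slope h a) (𝓝[<] a) (𝓝 d) :=
    hs.mono_left (nhdsWithin_mono _ (fun x hx => ne_of_lt hx))
  refine ge_of_tendsto hs' ?_
  have hm' : ∀ᶠ t in 𝓝[<] a, h t ≤ h a := hm.filter_mono (nhdsWithin_mono _ Iio_subset_Iic_self)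
  filter_upwards [hm', self_mem_nhdsWithin] with t ht (ht' : t < a)
  rw [slope_def_field]
  exact div_nonneg_of_nonpos (by linarith) (by linarith)

/-- Second derivative test at a local max. -/
lemma aux_second_deriv_nonpos {ψ : ℝ → ℝ} {a : ℝ}
    (h1 : ∀ᶠ x in 𝓝 a, DifferentiableAt ℝ ψ x)
    (h2 : DifferentiableAt ℝ (deriv ψ) a)
    (hmax : IsLocalMax ψ a) : deriv (deriv ψ) a ≤ 0 := by
  by_contra hpos
  push_neg at hpos
  have h0 : deriv ψ a = 0 := hmax.deriv_eq_zero
  have hs : Tendsto (slope (deriv ψ) a) (𝓝[≠] a) (𝓝 (deriv (deriv ψ) a)) :=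
    hasDerivAt_iff_tendsto_slope.1 h2.hasDerivAt
  have hs' : Tendsto (slope (deriv ψ) a) (𝓝[>] a) (𝓝 (deriv (deriv ψ) a)) :=
    hs.mono_left (nhdsWithin_mono _ (fun x hx => ne_of_gt hx))
  have hev : ∀ᶠ x in 𝓝[>] a, 0 < slope (deriv ψ) a x :=
    hs'.eventually (eventually_gt_nhds hpos)
  have hev2 : ∀ᶠ x in 𝓝[>] a, 0 < deriv ψ x := by
    filter_upwards [hev, self_mem_nhdsWithin] with x hx (hx' : a < x)
    rw [slope_def_field, h0, sub_zero] at hx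
    have := mul_pos hx (sub_pos.2 hx')
    rwa [div_mul_cancel₀] at this
    linarith
  have hev3 : ∀ᶠ x in 𝓝[>] a, DifferentiableAt ℝ ψ x ∧ ψ x ≤ ψ a :=
    (h1.and hmax).filter_mono nhdsWithin_le_nhds
  obtain ⟨u, hu, hsub⟩ := (mem_nhdsGT_iff_exists_Ioc_subset).1 ((hev2.and hev3).filter_mono le_rfl)
  have hmono : StrictMonoOn ψ (Icc a u) := by
    apply strictMonoOn_of_deriv_pos (convex_Icc a u)
    · intro x hx
      rcases eq_or_lt_of_le hx.1 with rfl | hlt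
      · exact (h1.self_of_nhds).continuousAt.continuousWithinAt
      · exact ((hsub ⟨hlt, hx.2⟩).2.1).continuousAt.continuousWithinAt
    · intro x hx
      rw [interior_Icc] at hx
      exact (hsub ⟨hx.1, hx.2.le⟩).1
  have : ψ a < ψ u := hmono (left_mem_Icc.2 hu.le) (right_mem_Icc.2 hu.le) hu
  exact absurd (hsub ⟨hu, le_rfl⟩).2.2 (not_le.2 this)

/-- differentiability of the derivative from C². -/
lemma aux_diff_deriv {φ : ℝ → ℝ} {a : ℝ} (h : ContDiffAt ℝ 2 φ a) :
    DifferentiableAt ℝ (deriv φ) a := by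
  have h1 : ContDiffAt ℝ 1 (fderiv ℝ φ) a := h.fderiv_right (by norm_num)
  have h2 : DifferentiableAt ℝ (fun x => fderiv ℝ φ x 1) a :=
    (h1.differentiableAt one_ne_zero).clm_apply (differentiableAt_const _)
  exact h2.congr_of_eventuallyEq (Eventually.of_forall fun x => (fderiv_apply_one_eq_deriv).symm)

/-- Spatial touching lemma. -/
lemma aux_touchX {b L e m x₀ : ℝ} (hb : 0 < b) (hL : 0 < L)
    (hz : 0 < (e - x₀)/(2*b) - m) {φx : ℝ → ℝ} (hφ : ContDiffAt ℝ 2 φx x₀)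
    (hmax : IsLocalMax (fun x => ((e - x)/(2*b) - m) ^ (-L) - φx x) x₀) :
    deriv φx x₀ = L/(2*b) * ((e - x₀)/(2*b) - m) ^ (-L-1) ∧
    L*(L+1)/(4*b^2) * ((e - x₀)/(2*b) - m) ^ (-L-2) ≤ deriv (deriv φx) x₀ := by
  have hu : ∀ x : ℝ, HasDerivAt (fun y => (e - y)/(2*b) - m) (-(1/(2*b))) x := by
    intro x
    have := (((hasDerivAt_id x).const_sub e).div_const (2*b)).sub_const m
    exact this.congr_deriv (by ring)
  have hucont : Continuous (fun y => (e - y)/(2*b) - m) := by fun_prop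
  have hupos : ∀ᶠ x in 𝓝 x₀, 0 < (e - x)/(2*b) - m :=
    (hucont.continuousAt).eventually_mem (Ioi_mem_nhds hz) |>.mono (fun x hx => hx)
  have hG : ∀ x : ℝ, 0 < (e - x)/(2*b) - m →
      HasDerivAt (fun y => ((e - y)/(2*b) - m) ^ (-L))
        (L/(2*b) * ((e - x)/(2*b) - m) ^ (-L-1)) x := by
    intro x hx
    have h2 := (hu x).rpow_const (p := -L) (Or.inl hx.ne')
    convert h2 using 1
    rw [show (-L - 1 : ℝ) = -L - 1 from rfl]
    ring
  have hG' : ∀ x : ℝ, 0 < (e - x)/(2*b) - m →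
      HasDerivAt (fun y => L/(2*b) * ((e - y)/(2*b) - m) ^ (-L-1))
        (L*(L+1)/(4*b^2) * ((e - x)/(2*b) - m) ^ (-L-2)) x := by
    intro x hx
    have h2 := ((hu x).rpow_const (p := -L-1) (Or.inl hx.ne')).const_mul (L/(2*b))
    rw [show (-L-1-1 : ℝ) = -L-2 by ring] at h2
    exact h2.congr_deriv (by ring)
  have hφev : ∀ᶠ x in 𝓝 x₀, ContDiffAt ℝ 2 φx x := hφ.eventually (by simp)
  have h1 : ∀ᶠ x in 𝓝 x₀, DifferentiableAt ℝ
      (fun y => ((e - y)/(2*b) - m) ^ (-L) - φx y) x := by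
    filter_upwards [hupos, hφev] with x hx hcx
    exact ((hG x hx).differentiableAt).sub (hcx.differentiableAt two_ne_zero)
  have hder0 : HasDerivAt (fun y => ((e - y)/(2*b) - m) ^ (-L) - φx y)
      (L/(2*b) * ((e - x₀)/(2*b) - m) ^ (-L-1) - deriv φx x₀) x₀ :=
    (hG x₀ hz).sub ((hφ.differentiableAt two_ne_zero).hasDerivAt)
  have hfirst : L/(2*b) * ((e - x₀)/(2*b) - m) ^ (-L-1) - deriv φx x₀ = 0 :=
    hmax.hasDerivAt_eq_zero hder0
  constructor
  · linarith
  · have hEq : (deriv fun y => ((e - y)/(2*b) - m) ^ (-L) - φx y) =ᶠ[𝓝 x₀]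
        fun x => L/(2*b) * ((e - x)/(2*b) - m) ^ (-L-1) - deriv φx x := by
      filter_upwards [hupos, hφev] with x hx hcx
      exact ((hG x hx).sub ((hcx.differentiableAt two_ne_zero).hasDerivAt)).deriv
    have hd2' : DifferentiableAt ℝ
        (fun x => L/(2*b) * ((e - x)/(2*b) - m) ^ (-L-1) - deriv φx x) x₀ :=
      (hG' x₀ hz).differentiableAt.sub (aux_diff_deriv hφ)
    have hd2 : DifferentiableAt ℝ
        (deriv fun y => ((e - y)/(2*b) - m) ^ (-L) - φx y) x₀ :=
      hd2'.congr_of_eventuallyEq hEq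
    have hle := aux_second_deriv_nonpos h1 hd2 hmax
    have hder2 : deriv (deriv fun y => ((e - y)/(2*b) - m) ^ (-L) - φx y) x₀
        = L*(L+1)/(4*b^2) * ((e - x₀)/(2*b) - m) ^ (-L-2) - deriv (deriv φx) x₀ := by
      rw [hEq.deriv_eq]
      exact ((hG' x₀ hz).sub (aux_diff_deriv hφ).hasDerivAt).deriv
    rw [hder2] at hle
    linarith

/-- Temporal touching lemma (one-sided, from the left). -/
lemma aux_touchT {c L s t₀ : ℝ} (hz : 0 < s - c*t₀)
    {φt : ℝ → ℝ} (hφ : DifferentiableAt ℝ φt t₀)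
    (hm : ∀ᶠ t in 𝓝[≤] t₀, (s - c*t) ^ (-L) - φt t ≤ (s - c*t₀) ^ (-L) - φt t₀) :
    deriv φt t₀ ≤ L*c*(s - c*t₀)^(-L-1) := by
  have hu : HasDerivAt (fun t => s - c*t) (-c) t₀ := by
    simpa using ((hasDerivAt_id t₀).const_mul c).const_sub s
  have hA : HasDerivAt (fun t => (s - c*t) ^ (-L)) (L*c*(s - c*t₀)^(-L-1)) t₀ := by
    have h2 := hu.rpow_const (p := -L) (Or.inl hz.ne')
    convert h2 using 1
    ring
  have h := aux_left_max_deriv_nonneg (hA.sub hφ.hasDerivAt) hm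
  linarith

/-- Second derivative at a local minimum of a C² function is nonnegative. -/
lemma aux_min_second {φ : ℝ → ℝ} {a : ℝ} (hφ : ContDiffAt ℝ 2 φ a)
    (hmin : IsLocalMin φ a) : 0 ≤ deriv (deriv φ) a := by
  have hev : ∀ᶠ x in 𝓝 a, ContDiffAt ℝ 2 φ x := hφ.eventually (by simp)
  have h1 : ∀ᶠ x in 𝓝 a, DifferentiableAt ℝ (fun y => -φ y) x :=
    hev.mono fun x hx => (hx.differentiableAt two_ne_zero).neg
  have hder : (deriv fun y => -φ y) = fun x => -deriv φ x := deriv.neg'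
  have h2 : DifferentiableAt ℝ (deriv fun y => -φ y) a := by
    rw [hder]; exact (aux_diff_deriv hφ).neg
  have hmax : IsLocalMax (fun y => -φ y) a := hmin.mono fun x hx => neg_le_neg hx
  have h3 := aux_second_deriv_nonpos h1 h2 hmax
  rw [hder] at h3
  have h4 : deriv (fun x => -deriv φ x) a = -deriv (deriv φ) a := deriv.neg
  rw [h4] at h3
  linarith

set_option maxHeartbeats 1000000 in
lemma aux_core (b α β : ℝ) (f g : ℝ → ℝ)
    (hb : 0 < b) (hα : α < 1) (hβ : 1 / (1 - α) ≤ β)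
    (hf : A1 f) (hf3 : A3 f β) (hg : A2 g α) :
    ∃ L0 : ℝ, 0 < L0 ∧ ∃ cL : ℝ → ℝ, Tendsto cL atTop atTop ∧
      ∀ L, L0 ≤ L → 0 < cL L ∧
        ∀ z y : ℝ, 0 < z → z ≤ 1 → L*(L+1)/(4*b^2) * z^(-L-2) ≤ y →
          L * cL L * z^(-L-1) ≤ f (1/2 * g (L/(2*b) * z^(-L-1)) * y) := by
  obtain ⟨fcont, fmono, f0, -, -⟩ := hf
  obtain ⟨hβ0, Cfp, Cfm, hCfp, -, hftop, -⟩ := hf3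
  obtain ⟨gcont, gpos, Cgp, Cgm, hCgp, -, hgtop, -⟩ := hg
  have h1α : (0:ℝ) < 1 - α := by linarith
  have hβ1 : 1 ≤ β * (1 - α) := by
    rw [div_le_iff₀ h1α] at hβ; linarith
  have h2b : (0:ℝ) < 2*b := by linarith
  -- lower bound for g at +∞
  have hgev : ∀ᶠ s in atTop, Cgp/2 ≤ |s| ^ α * g s :=
    hgtop.eventually (eventually_ge_nhds (by linarith))
  obtain ⟨S1r, hS1r⟩ := eventually_atTop.1 (hgev.and (eventually_ge_atTop 1))
  set S1 : ℝ := max S1r 1 with hS1def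
  have hS1one : (1:ℝ) ≤ S1 := le_max_right _ _
  have hgbound : ∀ s, S1 ≤ s → Cgp/2 * s^(-α) ≤ g s := by
    intro s hs
    obtain ⟨h1, h2⟩ := hS1r s (le_trans (le_max_left _ _) hs)
    have hs0 : (0:ℝ) < s := lt_of_lt_of_le one_pos h2
    rw [abs_of_pos hs0] at h1
    calc Cgp/2 * s^(-α) ≤ (s^α * g s) * s^(-α) :=
          mul_le_mul_of_nonneg_right h1 (Real.rpow_pos_of_pos hs0 _).le
      _ = g s := by
          rw [mul_comm (s^α) (g s), mul_assoc, ← Real.rpow_add hs0]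
          simp
  -- lower bound for f at +∞
  have hfev : ∀ᶠ s in atTop, Cfp/2 ≤ |s| ^ (-β) * f s :=
    hftop.eventually (eventually_ge_nhds (by linarith))
  obtain ⟨S2r, hS2r⟩ := eventually_atTop.1 (hfev.and (eventually_ge_atTop 1))
  set S2 : ℝ := max S2r 1 with hS2def
  have hfbound : ∀ s, S2 ≤ s → Cfp/2 * s^β ≤ f s := by
    intro s hs
    obtain ⟨h1, h2⟩ := hS2r s (le_trans (le_max_left _ _) hs)
    have hs0 : (0:ℝ) < s := lt_of_lt_of_le one_pos h2
    rw [abs_of_pos hs0] at h1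
    calc Cfp/2 * s^β ≤ (s^(-β) * f s) * s^β :=
          mul_le_mul_of_nonneg_right h1 (Real.rpow_pos_of_pos hs0 _).le
      _ = f s := by
          rw [mul_comm (s^(-β)) (f s), mul_assoc, ← Real.rpow_add hs0]
          simp
  -- constants
  set C₁ : ℝ := Cgp/4 / (2*b)^(-α) / (4*b^2) with hC₁def
  have hC₁ : 0 < C₁ := by
    have := Real.rpow_pos_of_pos h2b (-α)
    positivity
  set δ : ℝ := (2-α)*β - 1 with hδdef
  have hδ : 0 < δ := by
    have h2 : (2-α)*β = β*(1-α) + β := by ring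
    rw [hδdef, h2]; linarith
  refine ⟨max (max 1 (2*b*S1)) (S2/C₁), by positivity, fun L => (Cfp/2 * C₁^β) * L^δ,
    (tendsto_rpow_atTop hδ).const_mul_atTop (by positivity), ?_⟩
  intro L hL
  have hL1 : (1:ℝ) ≤ L := le_trans (le_trans (le_max_left _ _) (le_max_left _ _)) hL
  have hLpos : (0:ℝ) < L := by linarith
  have hLS1 : 2*b*S1 ≤ L := le_trans (le_trans (le_max_right _ _) (le_max_left _ _)) hL
  have hLS2 : S2 ≤ C₁ * L := by
    have := le_trans (le_max_right _ _) hL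
    rw [div_le_iff₀ hC₁] at this
    linarith
  have hc : 0 < (Cfp/2 * C₁^β) * L^δ :=
    mul_pos (by positivity) (Real.rpow_pos_of_pos hLpos _)
  refine ⟨hc, ?_⟩
  intro z y hz hz1 hy
  set w : ℝ := z⁻¹ with hwdef
  have hw0 : 0 < w := inv_pos.2 hz
  have hw1 : (1:ℝ) ≤ w := (one_le_inv₀ hz).2 hz1
  have hzw : ∀ s : ℝ, z ^ (-s) = w ^ s := by
    intro s
    rw [Real.rpow_neg hz.le, hwdef, ← Real.inv_rpow hz.le]
  have e1 : z^(-L-1) = w^(L+1) := by rw [show (-L-1:ℝ) = -(L+1) by ring, hzw]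
  have e2 : z^(-L-2) = w^(L+2) := by rw [show (-L-2:ℝ) = -(L+2) by ring, hzw]
  rw [e2] at hy
  simp only [e1]
  set P : ℝ := L/(2*b) * w^(L+1) with hPdef
  set Qq : ℝ := L*(L+1)/(4*b^2) * w^(L+2) with hQdef
  set θ : ℝ := (L+1)*(1-α)+1 with hθdef
  set mid : ℝ := C₁ * L^(2-α) * w^θ with hmiddef
  have hwL1 : (1:ℝ) ≤ w^(L+1) := by
    calc (1:ℝ) = 1^(L+1) := (Real.one_rpow _).symm
      _ ≤ w^(L+1) := Real.rpow_le_rpow zero_le_one hw1 (by linarith)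
  have hwθ : (1:ℝ) ≤ w^θ := by
    calc (1:ℝ) = 1^θ := (Real.one_rpow _).symm
      _ ≤ w^θ := by
        apply Real.rpow_le_rpow zero_le_one hw1
        have h2 : 0 ≤ (L+1)*(1-α) := mul_nonneg (by linarith) (by linarith)
        rw [hθdef]; linarith
  have hP1 : S1 ≤ P := by
    have h1 : S1 ≤ L/(2*b) := by rw [le_div_iff₀ h2b]; linarith
    calc S1 = S1 * 1 := (mul_one _).symm
      _ ≤ L/(2*b) * w^(L+1) := mul_le_mul h1 hwL1 zero_le_one (by positivity)
  have hPpos : 0 < P := lt_of_lt_of_le (by linarith) hP1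
  have hgP : Cgp/2 * P^(-α) ≤ g P := hgbound P hP1
  have hQpos : 0 < Qq :=
    mul_pos (by positivity) (Real.rpow_pos_of_pos hw0 _)
  -- mid ≤ (1/2) g(P) Qq
  have hPα : P ^ (-α) = L^(-α) / (2*b)^(-α) * w^((L+1)*(-α)) := by
    rw [hPdef, Real.mul_rpow (by positivity) (Real.rpow_pos_of_pos hw0 _).le,
      Real.div_rpow hLpos.le h2b.le, ← Real.rpow_mul hw0.le]
  have hL2α : L^(-α) * (L*L) = L^(2-α) := by
    rw [show (2-α:ℝ) = -α + 2 by ring, Real.rpow_add hLpos, Real.rpow_two]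
    ring
  have hmid2 : mid ≤ 1/2 * (Cgp/2 * P^(-α)) * Qq := by
    have hwmul : w^((L+1)*(-α)) * w^(L+2) = w^θ := by
      rw [← Real.rpow_add hw0, show (L+1)*(-α) + (L+2) = θ by rw [hθdef]; ring]
    have hexp : 1/2 * (Cgp/2 * P^(-α)) * Qq
        = C₁ * (L^(-α) * (L*(L+1))) * w^θ := by
      rw [hPα, ← hwmul, hQdef, hC₁def]
      have h2bα := (Real.rpow_pos_of_pos h2b (-α)).ne'
      field_simp
      ring
    rw [hexp, hmiddef, ← hL2α]
    have h1 : L^(-α) * (L*L) ≤ L^(-α) * (L*(L+1)) :=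
      mul_le_mul_of_nonneg_left
        (mul_le_mul_of_nonneg_left (by linarith) hLpos.le)
        (Real.rpow_pos_of_pos hLpos (-α)).le
    have hwθ0 : (0:ℝ) ≤ w^θ := (Real.rpow_pos_of_pos hw0 _).le
    exact mul_le_mul_of_nonneg_right (mul_le_mul_of_nonneg_left h1 hC₁.le) hwθ0
  have hmid3 : mid ≤ 1/2 * g P * Qq := by
    have h := mul_le_mul_of_nonneg_right hgP hQpos.le
    linarith
  have hmid_le : mid ≤ 1/2 * g P * y := by
    have h2 : 1/2 * g P * Qq ≤ 1/2 * g P * y :=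
      mul_le_mul_of_nonneg_left hy (by have := (gpos P).le; linarith)
    linarith
  have hmidS2 : S2 ≤ mid := by
    have h1 : L ≤ L^(2-α) := by
      calc L = L^(1:ℝ) := (Real.rpow_one L).symm
        _ ≤ L^(2-α) := Real.rpow_le_rpow_of_exponent_le hL1 (by linarith)
    calc S2 ≤ C₁ * L := hLS2
      _ = C₁ * L * 1 := (mul_one _).symm
      _ ≤ C₁ * L^(2-α) * w^θ := by
          apply mul_le_mul (mul_le_mul_of_nonneg_left h1 hC₁.le) hwθ zero_le_one
          positivity
  have hfmid : Cfp/2 * mid^β ≤ f mid := hfbound mid hmidS2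
  have hfstep : f mid ≤ f (1/2 * g P * y) := fmono.monotone hmid_le
  -- final coefficient computation
  have hmidβ : mid^β = C₁^β * L^((2-α)*β) * w^(θ*β) := by
    rw [hmiddef, Real.mul_rpow (by positivity) (Real.rpow_pos_of_pos hw0 _).le,
      Real.mul_rpow hC₁.le (Real.rpow_pos_of_pos hLpos _).le,
      ← Real.rpow_mul hLpos.le, ← Real.rpow_mul hw0.le]
  have hLc : L * ((Cfp/2 * C₁^β) * L^δ) = Cfp/2 * C₁^β * L^((2-α)*β) := by
    rw [show ((2-α)*β : ℝ) = 1 + δ by rw [hδdef]; ring, Real.rpow_add hLpos, Real.rpow_one]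
    ring
  have hwβ : w^(L+1) ≤ w^(θ*β) := by
    apply Real.rpow_le_rpow_of_exponent_le hw1
    have h2 : (L+1)*1 ≤ (L+1)*(β*(1-α)) :=
      mul_le_mul_of_nonneg_left hβ1 (by linarith)
    have h3 : ((L+1)*(1-α)+1)*β = (L+1)*(β*(1-α)) + β := by ring
    rw [hθdef, h3]; linarith
  calc L * ((Cfp/2 * C₁^β) * L^δ) * w^(L+1)
      = (Cfp/2 * C₁^β * L^((2-α)*β)) * w^(L+1) := by rw [hLc]
    _ ≤ (Cfp/2 * C₁^β * L^((2-α)*β)) * w^(θ*β) := by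
        apply mul_le_mul_of_nonneg_left hwβ
        have := Real.rpow_pos_of_pos hLpos ((2-α)*β)
        positivity
    _ = Cfp/2 * mid^β := by rw [hmidβ]; ring
    _ ≤ f mid := hfmid
    _ ≤ f (1/2 * g P * y) := hfstep

/-- construction of sub-solutions for `α < 1`, `β ≥ 1/(1-α)`
(Proposition 4.8). -/
theorem subsolution_construction (b α β : ℝ) (f g : ℝ → ℝ)
    (hb : 0 < b) (hα : α < 1) (hβ : 1 / (1 - α) ≤ β)
    (hf : A1 f) (hf3 : A3 f β) (hg : A2 g α) :
    ∃ L0 : ℝ, 0 < L0 ∧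
    ∃ cL : ℝ → ℝ, Tendsto cL atTop atTop ∧
      ∀ L : ℝ, L0 ≤ L →
        0 < cL L ∧
        ∀ φ : ℝ × ℝ → ℝ, ∀ p ∈ Qset b, ContDiffAt ℝ 2 φ p →
          IsLocalMaxOn (fun q => subVL b L (cL L) q - φ q) (Qset b) p →
          pT φ p ≤ f (1 / 2 * g (pX φ p) * pXX φ p) := by
  obtain ⟨L0, hL0, cL, hcL, hmain⟩ := aux_core b α β f g hb hα hβ hf hf3 hg
  refine ⟨L0, hL0, cL, hcL, fun L hLL => ?_⟩
  obtain ⟨hc, hcore⟩ := hmain L hLL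
  refine ⟨hc, ?_⟩
  have hL : 0 < L := lt_of_lt_of_le hL0 hLL
  have h2b : (0:ℝ) < 2*b := by linarith
  have h2bne : (2*b : ℝ) ≠ 0 := h2b.ne'
  have hgpos : ∀ s, 0 < g s := hg.2.1
  have hfmono : Monotone f := hf.2.1.monotone
  have hf0 : f 0 = 0 := hf.2.2.1
  set c : ℝ := cL L with hcdef
  intro φ p hp hφ hmax
  obtain ⟨x₀, t₀⟩ := p
  obtain ⟨hx, ht⟩ := hp
  have hx1 : -b < x₀ := hx.1
  have hx2 : x₀ < b := hx.2
  have ht0 : (0:ℝ) < t₀ := ht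
  have hQopen : IsOpen (Qset b) := IsOpen.prod isOpen_Ioo isOpen_Ioi
  have hmaxE : ∀ᶠ q in 𝓝 (x₀, t₀),
      subVL b L c q - φ q ≤ subVL b L c (x₀, t₀) - φ (x₀, t₀) :=
    hmax.isLocalMax (hQopen.mem_nhds ⟨hx, ht⟩)
  have htendX : Tendsto (fun x : ℝ => (x, t₀)) (𝓝 x₀) (𝓝 (x₀, t₀)) :=
    (continuous_id.prodMk continuous_const).tendsto x₀
  have htendT : Tendsto (fun t : ℝ => (x₀, t)) (𝓝 t₀) (𝓝 (x₀, t₀)) :=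
    (continuous_const.prodMk continuous_id).tendsto t₀
  have hφX : ContDiffAt ℝ 2 (fun x => φ (x, t₀)) x₀ :=
    hφ.comp x₀ (contDiffAt_id.prodMk contDiffAt_const)
  have hφT : ContDiffAt ℝ 2 (fun t => φ (x₀, t)) t₀ :=
    hφ.comp t₀ (contDiffAt_const.prodMk contDiffAt_id)
  have hpT : pT φ (x₀, t₀) = deriv (fun t => φ (x₀, t)) t₀ := rfl
  have hpX : pX φ (x₀, t₀) = deriv (fun x => φ (x, t₀)) x₀ := rfl
  have hpXX : pXX φ (x₀, t₀) = deriv (deriv (fun x => φ (x, t₀))) x₀ := rfl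
  rcases lt_trichotomy t₀ (1/c) with htc | htc | htc
  · -- t₀ < 1/c
    have hct : c * t₀ < 1 := by
      rw [lt_div_iff₀ hc] at htc; linarith
    rcases le_or_gt (b - 2*b*c*t₀) x₀ with hxt | hxt
    · -- region where v is given by the travelling profile (including the kink)
      have hzeq : (3*b - x₀)/(2*b) - c*t₀ = (3*b - x₀ - 2*b*(c*t₀))/(2*b) := by
        field_simp
      have h5 : 2*b*(c*t₀) < 2*b := by
        have := mul_lt_mul_of_pos_left hct h2b
        linarith
      have hz0 : 0 < (3*b - x₀)/(2*b) - c*t₀ := by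
        rw [hzeq]; exact div_pos (by linarith) h2b
      have hz1 : (3*b - x₀)/(2*b) - c*t₀ ≤ 1 := by
        rw [hzeq, div_le_one h2b]; linarith
      have hevU : ∀ᶠ q : ℝ × ℝ in 𝓝 (x₀, t₀), q.2 < 1/c := by
        have ho : IsOpen {q : ℝ × ℝ | q.2 < 1/c} :=
          isOpen_lt continuous_snd continuous_const
        exact ho.mem_nhds htc
      have hAle : ∀ᶠ q : ℝ × ℝ in 𝓝 (x₀, t₀),
          ((3*b - q.1)/(2*b) - c*q.2) ^ (-L) ≤ subVL b L c q := by
        filter_upwards [hevU] with q hq1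
        simp only [subVL]
        rw [if_neg (not_le.2 hq1)]
        by_cases hq : b - 2*b*c*q.2 ≤ q.1
        · rw [if_pos hq]
        · rw [if_neg hq]
          push_neg at hq
          apply Real.rpow_le_one_of_one_le_of_nonpos ?_ (by linarith)
          rw [le_sub_iff_add_le, le_div_iff₀ h2b]
          linarith
      have hAp : ((3*b - x₀)/(2*b) - c*t₀) ^ (-L) = subVL b L c (x₀, t₀) := by
        simp only [subVL]
        rw [if_neg (not_le.2 htc), if_pos hxt]
      have hmaxA : ∀ᶠ q : ℝ × ℝ in 𝓝 (x₀, t₀),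
          ((3*b - q.1)/(2*b) - c*q.2) ^ (-L) - φ q ≤
          ((3*b - x₀)/(2*b) - c*t₀) ^ (-L) - φ (x₀, t₀) := by
        filter_upwards [hmaxE, hAle] with q h1 h2
        rw [hAp]
        linarith
      have hmaxX : IsLocalMax
          (fun x => ((3*b - x)/(2*b) - c*t₀) ^ (-L) - φ (x, t₀)) x₀ :=
        htendX.eventually hmaxA
      obtain ⟨hd1, hd2⟩ := aux_touchX hb hL hz0 hφX hmaxX
      have hmT : ∀ᶠ t in 𝓝[≤] t₀,
          ((3*b - x₀)/(2*b) - c*t) ^ (-L) - φ (x₀, t) ≤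
          ((3*b - x₀)/(2*b) - c*t₀) ^ (-L) - φ (x₀, t₀) :=
        (htendT.eventually hmaxA).filter_mono nhdsWithin_le_nhds
      have htb := aux_touchT hz0 (hφT.differentiableAt two_ne_zero) hmT
      rw [hpT, hpX, hpXX, hd1]
      exact le_trans htb (hcore _ _ hz0 hz1 hd2)
    · -- constant region
      have hevC : ∀ᶠ q : ℝ × ℝ in 𝓝 (x₀, t₀), subVL b L c q = 1 := by
        have ho : IsOpen {q : ℝ × ℝ | q.2 < 1/c ∧ q.1 < b - 2*b*c*q.2} :=
          (isOpen_lt continuous_snd continuous_const).inter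
            (isOpen_lt continuous_fst (by fun_prop))
        filter_upwards [ho.mem_nhds ⟨htc, hxt⟩] with q hq
        simp only [subVL]
        rw [if_neg (not_le.2 hq.1), if_neg (not_le.2 hq.2)]
      have hCp : subVL b L c (x₀, t₀) = 1 := by
        simp only [subVL]
        rw [if_neg (not_le.2 htc), if_neg (not_le.2 hxt)]
      have hminφ : ∀ᶠ q : ℝ × ℝ in 𝓝 (x₀, t₀), φ (x₀, t₀) ≤ φ q := by
        filter_upwards [hmaxE, hevC] with q h1 h2
        rw [h2, hCp] at h1
        linarith
      have hminX : IsLocalMin (fun x => φ (x, t₀)) x₀ := htendX.eventually hminφ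
      have hminT : IsLocalMin (fun t => φ (x₀, t)) t₀ := htendT.eventually hminφ
      have hX0 : deriv (fun x => φ (x, t₀)) x₀ = 0 := hminX.deriv_eq_zero
      have hT0 : deriv (fun t => φ (x₀, t)) t₀ = 0 := hminT.deriv_eq_zero
      have hXX : 0 ≤ deriv (deriv (fun x => φ (x, t₀))) x₀ := aux_min_second hφX hminX
      rw [hpT, hpX, hpXX, hT0, hX0]
      have harg : 0 ≤ 1/2 * g 0 * deriv (deriv (fun x => φ (x, t₀))) x₀ :=
        mul_nonneg (mul_nonneg (by norm_num) (hgpos 0).le) hXX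
      calc (0:ℝ) = f 0 := hf0.symm
        _ ≤ _ := hfmono harg
  · -- t₀ = 1/c
    have hct : c * t₀ = 1 := by
      rw [htc]; field_simp
    have hz0 : 0 < (b - x₀)/(2*b) := div_pos (by linarith) h2b
    have hz1 : (b - x₀)/(2*b) ≤ 1 := by
      rw [div_le_one h2b]; linarith
    have hbase : (3*b - x₀)/(2*b) - c*t₀ = (b - x₀)/(2*b) := by
      rw [hct]; field_simp; ring
    have hsub : ∀ x : ℝ, subVL b L c (x, t₀) = ((b - x)/(2*b) - 0) ^ (-L) := by
      intro x
      simp only [subVL]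
      rw [if_pos htc.ge, sub_zero]
    have hmaxX : IsLocalMax
        (fun x => ((b - x)/(2*b) - 0) ^ (-L) - φ (x, t₀)) x₀ := by
      have h1 : ∀ᶠ x in 𝓝 x₀,
          subVL b L c (x, t₀) - φ (x, t₀) ≤ subVL b L c (x₀, t₀) - φ (x₀, t₀) :=
        htendX.eventually hmaxE
      have h2 : ∀ᶠ x in 𝓝 x₀,
          ((b - x)/(2*b) - 0) ^ (-L) - φ (x, t₀) ≤
          ((b - x₀)/(2*b) - 0) ^ (-L) - φ (x₀, t₀) := by
        filter_upwards [h1] with x hx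
        rw [← hsub x, ← hsub x₀]
        exact hx
      exact h2
    have hz0' : 0 < (b - x₀)/(2*b) - 0 := by rw [sub_zero]; exact hz0
    obtain ⟨hd1, hd2⟩ := aux_touchX hb hL hz0' hφX hmaxX
    rw [sub_zero] at hd1 hd2
    -- temporal part
    have hev : ∀ᶠ t in 𝓝 t₀, b - 2*b*c*t < x₀ := by
      have ho : IsOpen {t : ℝ | b - 2*b*c*t < x₀} :=
        isOpen_lt (by fun_prop) continuous_const
      apply ho.mem_nhds
      show b - 2*b*c*t₀ < x₀
      have h6 : 2*b*c*t₀ = 2*b := by rw [mul_assoc, hct, mul_one]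
      linarith
    have hsubT : subVL b L c (x₀, t₀) = ((3*b - x₀)/(2*b) - c*t₀) ^ (-L) := by
      rw [hbase, ← sub_zero ((b - x₀)/(2*b))]
      exact hsub x₀
    have hmT : ∀ᶠ t in 𝓝[≤] t₀,
        ((3*b - x₀)/(2*b) - c*t) ^ (-L) - φ (x₀, t) ≤
        ((3*b - x₀)/(2*b) - c*t₀) ^ (-L) - φ (x₀, t₀) := by
      have h1 : ∀ᶠ t in 𝓝[≤] t₀,
          subVL b L c (x₀, t) - φ (x₀, t) ≤ subVL b L c (x₀, t₀) - φ (x₀, t₀) :=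
        (htendT.eventually hmaxE).filter_mono nhdsWithin_le_nhds
      filter_upwards [h1, hev.filter_mono nhdsWithin_le_nhds,
        self_mem_nhdsWithin] with t h1t h2t h3t
      have h4 : ((3*b - x₀)/(2*b) - c*t) ^ (-L) = subVL b L c (x₀, t) := by
        rcases eq_or_lt_of_le (mem_Iic.1 h3t) with rfl | hlt
        · exact hsubT.symm
        · simp only [subVL]
          rw [if_neg (not_le.2 (htc ▸ hlt)), if_pos h2t.le]
      rw [h4, ← hsubT]
      exact h1t
    have hz0A : 0 < (3*b - x₀)/(2*b) - c*t₀ := by rw [hbase]; exact hz0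
    have htb := aux_touchT hz0A (hφT.differentiableAt two_ne_zero) hmT
    rw [hbase] at htb
    rw [hpT, hpX, hpXX, hd1]
    exact le_trans htb (hcore _ _ hz0 hz1 hd2)
  · -- t₀ > 1/c
    have hz0 : 0 < (b - x₀)/(2*b) := div_pos (by linarith) h2b
    have hz1 : (b - x₀)/(2*b) ≤ 1 := by
      rw [div_le_one h2b]; linarith
    have hev : ∀ᶠ q : ℝ × ℝ in 𝓝 (x₀, t₀),
        subVL b L c q = ((b - q.1)/(2*b)) ^ (-L) := by
      have ho : IsOpen {q : ℝ × ℝ | 1/c < q.2} :=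
        isOpen_lt continuous_const continuous_snd
      filter_upwards [ho.mem_nhds htc] with q hq
      simp only [subVL]
      rw [if_pos (le_of_lt hq)]
    have hBp : subVL b L c (x₀, t₀) = ((b - x₀)/(2*b)) ^ (-L) := by
      simp only [subVL]
      rw [if_pos (le_of_lt htc)]
    have hmaxB : ∀ᶠ q : ℝ × ℝ in 𝓝 (x₀, t₀),
        ((b - q.1)/(2*b)) ^ (-L) - φ q ≤ ((b - x₀)/(2*b)) ^ (-L) - φ (x₀, t₀) := by
      filter_upwards [hmaxE, hev] with q h1 h2
      rw [← h2, ← hBp]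
      exact h1
    have hmaxX : IsLocalMax
        (fun x => ((b - x)/(2*b) - 0) ^ (-L) - φ (x, t₀)) x₀ := by
      have h2 : ∀ᶠ x in 𝓝 x₀,
          ((b - x)/(2*b) - 0) ^ (-L) - φ (x, t₀) ≤
          ((b - x₀)/(2*b) - 0) ^ (-L) - φ (x₀, t₀) := by
        filter_upwards [htendX.eventually hmaxB] with x hx
        rw [sub_zero, sub_zero]
        exact hx
      exact h2
    have hz0' : 0 < (b - x₀)/(2*b) - 0 := by rw [sub_zero]; exact hz0
    obtain ⟨hd1, hd2⟩ := aux_touchX hb hL hz0' hφX hmaxX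
    rw [sub_zero] at hd1 hd2
    have hminT : IsLocalMin (fun t => φ (x₀, t)) t₀ := by
      have h1 : ∀ᶠ t in 𝓝 t₀, φ (x₀, t₀) ≤ φ (x₀, t) := by
        filter_upwards [htendT.eventually hmaxB] with t htt
        linarith
      exact h1
    have hT0 : deriv (fun t => φ (x₀, t)) t₀ = 0 := hminT.deriv_eq_zero
    rw [hpT, hpX, hpXX, hT0, hd1]
    have hpos : 0 ≤ L * c * ((b - x₀)/(2*b)) ^ (-L-1) :=
      mul_nonneg (mul_nonneg hL.le hc.le) (Real.rpow_pos_of_pos hz0 _).le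
    exact le_trans hpos (hcore _ _ hz0 hz1 hd2)
end
end

section
/- Let b>0 and assume f,g∈C(ℝ) satisfy (A1) and (A2) with exponent α satisfying 1<α≤2. Then there exists a pair (W,c)∈C²((−b,b))×(0,∞) satisfying the traveling-wave profile equation f^{−1}(c) = g(W′(x))W″(x) for all x∈(−b,b) together with lim_{x→b}W′(x)=+∞ and lim_{x→−b}W′(x)=−∞. Moreover, if (W̃,c̃)∈C²((−b,b))×(0,∞) is another such pair, then c̃=c and W̃−W is constant. Furthermore, W satisfies lim_{x→±b}W(x)=∞, and there exist constants D₊,D₋>0 such that lim_{x→b} W(x)/ψ_{(2−α)/(α−1)}(b−x) = D₊ and lim_{x→−b} W(x)/ψ_{(2−α)/(α−1)}(b+x) = D₋, where ψ_γ(s):=s^{−γ} for γ>0 and ψ₀(s):=−log s. -/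
open Filter Set Topology

noncomputable section

open MeasureTheory

lemma tendsto_rpow_neg_zero {γ : ℝ} (hγ : 0 < γ) :
    Tendsto (fun s : ℝ => s ^ (-γ)) (𝓝[>] (0:ℝ)) atTop := by
  have h1 : Tendsto (fun s : ℝ => s ^ γ) (𝓝[>] (0:ℝ)) (𝓝[>] (0:ℝ)) := by
    rw [tendsto_nhdsWithin_iff]
    constructor
    · have := (Real.continuousAt_rpow_const 0 γ (Or.inr hγ.le)).tendsto
      rw [Real.zero_rpow hγ.ne'] at this
      exact this.mono_left nhdsWithin_le_nhds
    · filter_upwards [self_mem_nhdsWithin] with s hs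
      exact Real.rpow_pos_of_pos hs γ
  have := tendsto_inv_nhdsGT_zero.comp h1
  apply this.congr'
  filter_upwards [self_mem_nhdsWithin] with s hs
  simp [Function.comp, Real.rpow_neg (le_of_lt hs)]

lemma psi_tendsto {γ : ℝ} : Tendsto (psi γ) (𝓝[>] (0:ℝ)) atTop := by
  unfold psi
  rcases lt_or_ge 0 γ with h | h
  · simpa [h] using tendsto_rpow_neg_zero h
  · have : Tendsto (fun s : ℝ => -Real.log s) (𝓝[>] (0:ℝ)) atTop :=
      tendsto_neg_atBot_atTop.comp Real.tendsto_log_nhdsGT_zero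
    simpa [not_lt.2 h, not_lt_of_ge h] using this

lemma tail_integrable {h : ℝ → ℝ} {α C : ℝ} (hα : 1 < α) (hC : 0 < C)
    (hcont : Continuous h) (hpos : ∀ s, 0 < h s)
    (hlim : Tendsto (fun s => |s| ^ α * h s) atTop (𝓝 C)) :
    IntegrableOn h (Ioi (0:ℝ)) := by
  obtain ⟨s₀, hs₀⟩ : ∃ s₀ : ℝ, ∀ s ≥ s₀, |s| ^ α * h s ≤ C + 1 := by
    have := hlim.eventually (eventually_le_nhds (by linarith : C < C + 1))
    exact this.exists_forall_of_atTop
  set t₀ : ℝ := max s₀ 1 with ht₀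
  have ht₀1 : (1:ℝ) ≤ t₀ := le_max_right _ _
  have h1 : IntegrableOn h (Ioi t₀) := by
    have hint : IntegrableOn (fun s : ℝ => (C+1) * s ^ (-α)) (Ioi t₀) :=
      (integrableOn_Ioi_rpow_of_lt (by linarith) (by linarith : (0:ℝ) < t₀)).smul (C+1)
    apply Integrable.mono' hint
    · exact (hcont.aestronglyMeasurable).restrict
    · filter_upwards [ae_restrict_mem measurableSet_Ioi] with s hs
      have hs1 : (1:ℝ) ≤ s := le_trans ht₀1 (le_of_lt hs)
      have hspos : (0:ℝ) < s := by linarith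
      have := hs₀ s (le_trans (le_max_left _ _) (le_of_lt hs))
      rw [abs_of_pos hspos] at this
      have hsa : (0:ℝ) < s ^ α := Real.rpow_pos_of_pos hspos α
      rw [Real.norm_eq_abs, abs_of_pos (hpos s)]
      rw [Real.rpow_neg hspos.le]
      have hinv : s ^ α * (s ^ α)⁻¹ = 1 := mul_inv_cancel₀ hsa.ne'
      nlinarith [inv_pos.2 hsa, hpos s]
  have h2 : IntegrableOn h (Ioc 0 t₀) := by
    exact hcont.integrableOn_Ioc
  have : IntegrableOn h (Ioc 0 t₀ ∪ Ioi t₀) := h2.union h1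
  rwa [Ioc_union_Ioi_eq_Ioi (by linarith : (0:ℝ) ≤ t₀)] at this

-- tail ratio
lemma tail_ratio {h : ℝ → ℝ} {α C : ℝ} (hα : 1 < α) (hC : 0 < C)
    (hcont : Continuous h) (hpos : ∀ s, 0 < h s)
    (hlim : Tendsto (fun s => |s| ^ α * h s) atTop (𝓝 C)) :
    Tendsto (fun v => v ^ (α-1) * ∫ s in Ioi v, h s) atTop (𝓝 (C/(α-1))) := by
  have hInt := tail_integrable hα hC hcont hpos hlim
  rw [Metric.tendsto_atTop]
  intro δ hδ
  set ε : ℝ := min (δ * (α-1) / 2) (C/2) with hε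
  have hεpos : 0 < ε := lt_min (div_pos (mul_pos hδ (by linarith)) two_pos) (by positivity)
  have hεC : ε < C := lt_of_le_of_lt (min_le_right _ _) (by linarith)
  obtain ⟨s₀, hs₀⟩ : ∃ s₀ : ℝ, ∀ s ≥ s₀, |s| ^ α * h s ∈ Icc (C - ε) (C + ε) := by
    have := hlim.eventually (Metric.closedBall_mem_nhds C hεpos)
    simp only [Metric.mem_closedBall, Real.dist_eq, abs_sub_le_iff] at this
    have := this.exists_forall_of_atTop
    obtain ⟨s₀, hs₀⟩ := this
    exact ⟨s₀, fun s hs => ⟨by linarith [(hs₀ s hs).2], by linarith [(hs₀ s hs).1]⟩⟩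
  refine ⟨max s₀ 1, fun v hv => ?_⟩
  have hv1 : (1:ℝ) ≤ v := le_trans (le_max_right _ _) hv
  have hvpos : (0:ℝ) < v := by linarith
  -- pointwise bounds on Ioi v
  have hbound : ∀ s ∈ Ioi v, (C - ε) * s ^ (-α) ≤ h s ∧ h s ≤ (C + ε) * s ^ (-α) := by
    intro s hs
    have hsv : v < s := hs
    have hspos : 0 < s := lt_trans hvpos hsv
    have := hs₀ s (le_trans (le_max_left _ _) (le_of_lt (lt_of_le_of_lt hv hsv)))
    rw [abs_of_pos hspos] at this
    have hsa : (0:ℝ) < s ^ α := Real.rpow_pos_of_pos hspos α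
    constructor
    · rw [Real.rpow_neg hspos.le]
      rw [mem_Icc] at this
      calc (C - ε) * (s ^ α)⁻¹ ≤ (s ^ α * h s) * (s ^ α)⁻¹ := by
            apply mul_le_mul_of_nonneg_right this.1 (by positivity)
        _ = h s := by field_simp
    · rw [Real.rpow_neg hspos.le]
      rw [mem_Icc] at this
      calc h s = (s ^ α * h s) * (s ^ α)⁻¹ := by field_simp
        _ ≤ (C + ε) * (s ^ α)⁻¹ := mul_le_mul_of_nonneg_right this.2 (by positivity)
  have hIv : IntegrableOn h (Ioi v) := hInt.mono_set (Ioi_subset_Ioi hvpos.le)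
  have hIrpow : IntegrableOn (fun s : ℝ => s ^ (-α)) (Ioi v) :=
    integrableOn_Ioi_rpow_of_lt (by linarith) hvpos
  have hval : ∫ s in Ioi v, s ^ (-α) = v ^ (1 - α) / (α - 1) := by
    rw [integral_Ioi_rpow_of_lt (by linarith) hvpos]
    rw [show -α + 1 = 1 - α by ring]
    rw [div_eq_div_iff (by linarith) (by linarith)]
    ring
  have hup : ∫ s in Ioi v, h s ≤ (C + ε) * (v ^ (1-α) / (α-1)) := by
    rw [← hval, ← MeasureTheory.integral_const_mul]
    apply setIntegral_mono_on hIv (hIrpow.const_mul _) measurableSet_Ioi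
    intro s hs; exact (hbound s hs).2
  have hlo : (C - ε) * (v ^ (1-α) / (α-1)) ≤ ∫ s in Ioi v, h s := by
    rw [← hval, ← MeasureTheory.integral_const_mul]
    apply setIntegral_mono_on (hIrpow.const_mul _) hIv measurableSet_Ioi
    intro s hs; exact (hbound s hs).1
  have hvv : v ^ (α - 1) * v ^ (1 - α) = 1 := by
    rw [← Real.rpow_add hvpos]; norm_num
  have hvm : (0:ℝ) < v ^ (α-1) := Real.rpow_pos_of_pos hvpos _
  rw [Real.dist_eq, abs_sub_lt_iff]
  have e1 : v ^ (α-1) * ((C + ε) * (v ^ (1-α) / (α-1))) = (C + ε)/(α-1) := by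
    calc v ^ (α-1) * ((C + ε) * (v ^ (1-α) / (α-1)))
        = (v ^ (α-1) * v ^ (1-α)) * (C + ε) / (α-1) := by ring
      _ = (C + ε)/(α-1) := by rw [hvv]; ring
  have e2 : v ^ (α-1) * ((C - ε) * (v ^ (1-α) / (α-1))) = (C - ε)/(α-1) := by
    calc v ^ (α-1) * ((C - ε) * (v ^ (1-α) / (α-1)))
        = (v ^ (α-1) * v ^ (1-α)) * (C - ε) / (α-1) := by ring
      _ = (C - ε)/(α-1) := by rw [hvv]; ring
  have hup' : v ^ (α-1) * ∫ s in Ioi v, h s ≤ (C + ε)/(α-1) := by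
    rw [← e1]; exact mul_le_mul_of_nonneg_left hup hvm.le
  have hlo' : (C - ε)/(α-1) ≤ v ^ (α-1) * ∫ s in Ioi v, h s := by
    rw [← e2]; exact mul_le_mul_of_nonneg_left hlo hvm.le
  have hεδ : ε / (α-1) < δ := by
    have : ε ≤ δ * (α-1)/2 := min_le_left _ _
    rw [div_lt_iff₀ (by linarith : (0:ℝ) < α - 1)]
    nlinarith
  constructor
  · have : (C + ε)/(α-1) - C/(α-1) = ε/(α-1) := by ring
    linarith [hup', this]
  · have : C/(α-1) - (C - ε)/(α-1) = ε/(α-1) := by ring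
    linarith [hlo']

lemma tendsto_sub_right {b : ℝ} : Tendsto (fun x => b - x) (𝓝[<] b) (𝓝[>] (0:ℝ)) := by
  rw [tendsto_nhdsWithin_iff]
  constructor
  · have : Tendsto (fun x => b - x) (𝓝 b) (𝓝 (b - b)) := tendsto_const_nhds.sub tendsto_id
    rw [sub_self] at this
    exact this.mono_left nhdsWithin_le_nhds
  · filter_upwards [self_mem_nhdsWithin] with x hx
    exact sub_pos.2 (mem_Iio.mp hx)

lemma side_asym {b m K : ℝ} {v W : ℝ → ℝ} (hb : 0 < b) (hm : 1 ≤ m) (hK : 0 < K)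
    (hv : ContinuousOn v (Ioo (-b) b))
    (hW : ∀ x₁ ∈ Ioo (-b) b, ∀ x₂ ∈ Ioo (-b) b, W x₂ - W x₁ = ∫ t in x₁..x₂, v t)
    (hvK : Tendsto (fun x => v x * (b - x) ^ m) (𝓝[<] b) (𝓝 K)) :
    Tendsto (fun x => W x / psi (m-1) (b-x)) (𝓝[<] b)
      (𝓝 (K / (if 1 < m then m-1 else 1))) ∧ Tendsto W (𝓝[<] b) atTop := by
  set γ' : ℝ := if 1 < m then m-1 else 1 with hγ'
  have hγpos : 0 < γ' := by
    rw [hγ']; split <;> [linarith; norm_num]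
  set P : ℝ → ℝ := fun x => psi (m-1) (b-x) with hPdef
  have hP : Tendsto P (𝓝[<] b) atTop := psi_tendsto.comp tendsto_sub_right
  have hP' : ∀ t ∈ Iio b, HasDerivAt (fun t => P t / γ') ((b-t) ^ (-m)) t := by
    intro t ht
    have hbt : (0:ℝ) < b - t := sub_pos.2 ht
    rcases lt_or_ge 1 m with h1 | h1
    · have hps : 0 < m - 1 := by linarith
      have heq : (fun t => P t / γ') = (fun t => (b-t) ^ (-(m-1)) / (m-1)) := by
        funext s; simp only [hPdef, psi, if_pos hps, hγ', if_pos h1]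
      rw [heq]
      have hf : HasDerivAt (fun t : ℝ => b - t) (-1) t := by
        simpa using (hasDerivAt_id t).const_sub b
      have := (hf.rpow_const (p := -(m-1)) (Or.inl hbt.ne')).div_const (m-1)
      refine this.congr_deriv ?_
      rw [show -(m-1) - 1 = -m by ring]
      field_simp
    · have hm1 : m = 1 := le_antisymm h1 hm
      have heq : (fun t => P t / γ') = (fun t => -Real.log (b-t)) := by
        funext s
        simp only [hPdef, psi, hγ', hm1]
        norm_num
      rw [heq]
      have hf : HasDerivAt (fun t : ℝ => b - t) (-1) t := by
        simpa using (hasDerivAt_id t).const_sub b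
      have := (hf.log hbt.ne').neg
      refine this.congr_deriv ?_
      rw [hm1, Real.rpow_neg_one]
      field_simp
  have hint : ∀ x₁ x₂ : ℝ, x₁ ≤ x₂ → x₂ < b →
      ∫ t in x₁..x₂, (b-t) ^ (-m) = P x₂ / γ' - P x₁ / γ' := by
    intro x₁ x₂ h12 h2b
    have hcont : ContinuousOn (fun t : ℝ => (b-t) ^ (-m)) (uIcc x₁ x₂) := by
      apply ContinuousOn.rpow_const
      · exact (continuous_const.sub continuous_id).continuousOn
      · intro t ht
        rw [uIcc_of_le h12] at ht
        exact Or.inl (sub_ne_zero.2 (ne_of_gt (lt_of_le_of_lt ht.2 h2b)))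
    exact intervalIntegral.integral_eq_sub_of_hasDerivAt
      (fun t ht => hP' t (by rw [uIcc_of_le h12] at ht; exact lt_of_le_of_lt ht.2 h2b))
      (hcont.intervalIntegrable)
  have hratio : Tendsto (fun x => W x / P x) (𝓝[<] b) (𝓝 (K / γ')) := by
    rw [Metric.tendsto_nhds]
    intro δ hδ
    set ε : ℝ := min (δ * γ' / 2) (K/2) with hε
    have hεpos : 0 < ε := lt_min (by positivity) (by positivity)
    have hεγ : ε / γ' ≤ δ / 2 := by
      rw [div_le_div_iff₀ hγpos two_pos]
      have : ε ≤ δ * γ' / 2 := min_le_left _ _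
      nlinarith
    -- find x₁
    have hmem : {x | K - ε ≤ v x * (b - x) ^ m ∧ v x * (b - x) ^ m ≤ K + ε} ∩ Ioo (-b) b
        ∈ 𝓝[<] b := by
      apply inter_mem
      · have := hvK.eventually (Metric.closedBall_mem_nhds K hεpos)
        apply this.mono
        intro x hx
        simp only [Metric.mem_closedBall, Real.dist_eq, abs_sub_le_iff] at hx
        exact ⟨by linarith [hx.2], by linarith [hx.1]⟩
      · exact Ioo_mem_nhdsLT_of_mem ⟨by linarith, le_refl b⟩
    rw [mem_nhdsLT_iff_exists_Ioo_subset] at hmem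
    obtain ⟨l, hl, hsub⟩ := hmem
    set x₁ : ℝ := max ((l + b)/2) 0 with hx₁def
    have hx₁l : l < x₁ := by
      rcases le_or_gt ((l+b)/2) 0 with h | h
      · have : l < 0 := by simp only [mem_Iio] at hl; nlinarith [hl]
        calc l < 0 := this
          _ ≤ x₁ := le_max_right _ _
      · calc l < (l+b)/2 := by simp only [mem_Iio] at hl; linarith
          _ ≤ x₁ := le_max_left _ _
    have hx₁b : x₁ < b := by
      simp only [mem_Iio] at hl
      apply max_lt _ hb
      linarith
    have hx₁mem : x₁ ∈ Ioo l b := ⟨hx₁l, hx₁b⟩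
    have hx₁Ioo : x₁ ∈ Ioo (-b) b := (hsub hx₁mem).2
    -- bounds on [x₁, x] for x < b
    have hbd : ∀ t, x₁ ≤ t → t < b →
        (K - ε) * (b - t) ^ (-m) ≤ v t ∧ v t ≤ (K + ε) * (b - t) ^ (-m) := by
      intro t ht1 ht2
      have htl : t ∈ Ioo l b := ⟨lt_of_lt_of_le hx₁l ht1, ht2⟩
      obtain ⟨⟨hlo, hhi⟩, _⟩ := hsub htl
      have hbt : (0:ℝ) < b - t := by linarith
      have hbm : (0:ℝ) < (b - t) ^ m := Real.rpow_pos_of_pos hbt m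
      have hbmm : (b-t) ^ m * (b-t) ^ (-m) = 1 := by
        rw [← Real.rpow_add hbt]; norm_num
      constructor
      · nlinarith [Real.rpow_pos_of_pos hbt (-m)]
      · nlinarith [Real.rpow_pos_of_pos hbt (-m)]
    set A : ℝ := W x₁ - (K - ε) * (P x₁ / γ') with hA
    set B : ℝ := W x₁ - (K + ε) * (P x₁ / γ') with hB
    have key : ∀ x, x₁ ≤ x → x ∈ Ioo (-b) b →
        (K - ε) * (P x / γ') + A ≤ W x ∧ W x ≤ (K + ε) * (P x / γ') + B := by
      intro x hx1 hxIoo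
      have hxb : x < b := hxIoo.2
      have hWeq : W x = W x₁ + ∫ t in x₁..x, v t := by
        have := hW x₁ hx₁Ioo x hxIoo
        linarith
      have hvi : IntervalIntegrable v volume x₁ x := by
        apply ContinuousOn.intervalIntegrable
        apply hv.mono
        rw [uIcc_of_le hx1]
        intro t ht
        exact ⟨lt_of_lt_of_le hx₁Ioo.1 ht.1, lt_of_le_of_lt ht.2 hxb⟩
      have hwi : ∀ c : ℝ, IntervalIntegrable (fun t => c * (b-t) ^ (-m)) volume x₁ x := by
        intro c
        apply ContinuousOn.intervalIntegrable
        apply ContinuousOn.const_smul ?_ c |>.congr (fun t ht => rfl)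
        apply ContinuousOn.rpow_const (continuous_const.sub continuous_id).continuousOn
        intro t ht
        rw [uIcc_of_le hx1] at ht
        exact Or.inl (sub_ne_zero.2 (ne_of_gt (lt_of_le_of_lt ht.2 hxb)))
      have hIup : ∫ t in x₁..x, v t ≤ ∫ t in x₁..x, (K + ε) * (b-t) ^ (-m) := by
        apply intervalIntegral.integral_mono_on hx1 hvi (hwi _)
        intro t ht
        exact (hbd t ht.1 (lt_of_le_of_lt ht.2 hxb)).2
      have hIlo : ∫ t in x₁..x, (K - ε) * (b-t) ^ (-m) ≤ ∫ t in x₁..x, v t := by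
        apply intervalIntegral.integral_mono_on hx1 (hwi _) hvi
        intro t ht
        exact (hbd t ht.1 (lt_of_le_of_lt ht.2 hxb)).1
      have hc : ∀ c : ℝ, ∫ t in x₁..x, c * (b-t) ^ (-m) = c * (P x / γ' - P x₁ / γ') := by
        intro c
        rw [intervalIntegral.integral_const_mul, hint x₁ x hx1 hxb]
      rw [hc] at hIup hIlo
      constructor
      · rw [hA]; linarith
      · rw [hB]; linarith
    -- conclude
    have hPbig : ∀ᶠ x in 𝓝[<] b, max 1 ((2 * (|A| + |B|))/δ + 1) ≤ P x :=
      hP.eventually (eventually_ge_atTop _)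
    filter_upwards [hPbig, Ioo_mem_nhdsLT_of_mem (⟨hx₁b, le_refl b⟩ : b ∈ Ioc x₁ b),
      Ioo_mem_nhdsLT_of_mem (⟨(by linarith : -b < b), le_refl b⟩ : b ∈ Ioc (-b) b)]
      with x hPx hx1 hxIoo
    have hPx1 : (1:ℝ) ≤ P x := le_trans (le_max_left _ _) hPx
    have hPxpos : 0 < P x := by linarith
    have hPxAB : 2 * (|A| + |B|) < δ * P x := by
      have : (2 * (|A| + |B|))/δ + 1 ≤ P x := le_trans (le_max_right _ _) hPx
      rw [div_add' _ _ _ (ne_of_gt hδ)] at this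
      rw [div_le_iff₀ hδ] at this
      nlinarith
    obtain ⟨hklo, hkhi⟩ := key x hx1.1.le hxIoo
    rw [Real.dist_eq, abs_lt]
    have hid : W x / P x - K / γ' = (W x - (K/γ')*P x)/P x := by
      field_simp
    have hhalf := mul_le_mul_of_nonneg_right hεγ hPxpos.le
    have e3 : (K - ε) * (P x / γ') = K/γ' * P x - ε/γ' * P x := by ring
    have e4 : (K + ε) * (P x / γ') = K/γ' * P x + ε/γ' * P x := by ring
    have hAb : -|A| ≤ A := neg_abs_le A
    have hBb : B ≤ |B| := le_abs_self B
    have h0A : (0:ℝ) ≤ |A| := abs_nonneg A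
    have h0B : (0:ℝ) ≤ |B| := abs_nonneg B
    clear_value A B ε γ' P x₁
    constructor
    · rw [hid, lt_div_iff₀ hPxpos]
      linarith [hklo]
    · rw [hid, div_lt_iff₀ hPxpos]
      linarith [hkhi]
  have hD : 0 < K/γ' := div_pos hK hγpos
  refine ⟨hratio, ?_⟩
  have hmul : Tendsto (fun x => (W x / P x) * P x) (𝓝[<] b) atTop :=
    Tendsto.pos_mul_atTop hD hratio hP
  apply hmul.congr'
  filter_upwards [hP.eventually (eventually_ge_atTop 1)] with x hx
  rw [div_mul_cancel₀ _ (by linarith : P x ≠ 0)]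

lemma tail_eq {h : ℝ → ℝ} (hI : IntegrableOn h (Ioi (0:ℝ))) {w : ℝ} (hw : 0 ≤ w) :
    (∫ s in Ioi (0:ℝ), h s) - ∫ s in (0:ℝ)..w, h s = ∫ s in Ioi w, h s := by
  rw [intervalIntegral.integral_of_le hw]
  rw [show Ioi (0:ℝ) = Ioc 0 w ∪ Ioi w from (Ioc_union_Ioi_eq_Ioi hw).symm]
  rw [setIntegral_union (Ioc_disjoint_Ioi le_rfl) measurableSet_Ioi
    (hI.mono_set Ioc_subset_Ioi_self) (hI.mono_set (Ioi_subset_Ioi hw))]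
  ring

lemma const_of_deriv0 {p q : ℝ} {F : ℝ → ℝ} (h : ∀ x ∈ Ioo p q, HasDerivAt F 0 x) :
    ∀ x ∈ Ioo p q, ∀ y ∈ Ioo p q, F x = F y := by
  have key : ∀ x y, x ∈ Ioo p q → y ∈ Ioo p q → x < y → F x = F y := by
    intro x y hx hy hxy
    have hsub : Icc x y ⊆ Ioo p q := fun t ht =>
      ⟨lt_of_lt_of_le hx.1 ht.1, lt_of_le_of_lt ht.2 hy.2⟩
    have hcont : ContinuousOn F (Icc x y) := fun t ht =>
      ((h t (hsub ht)).continuousAt).continuousWithinAt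
    obtain ⟨cc, _, hc0⟩ := exists_hasDerivAt_eq_slope F (fun _ => 0) hxy hcont
      (fun t ht => h t (hsub (Ioo_subset_Icc_self ht)))
    have h0 : (F y - F x)/(y - x) = 0 := hc0.symm
    rw [div_eq_zero_iff] at h0
    rcases h0 with h0 | h0
    · linarith
    · exfalso; exact (sub_ne_zero.2 (ne_of_gt hxy)) h0
  intro x hx y hy
  rcases lt_trichotomy x y with h1 | h1 | h1
  · exact key x y hx hy h1
  · rw [h1]
  · exact (key y x hy hx h1).symm

set_option maxHeartbeats 3000000 in
/-- existence, uniqueness (up to vertical translation) and asymptotics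
of traveling wave profiles for `1 < α ≤ 2` (Proposition A.1 (a)). -/
theorem travelingWave_exists (b α : ℝ) (f g : ℝ → ℝ)
    (hb : 0 < b) (hf : A1 f) (hg : A2 g α) (hα1 : 1 < α) (hα2 : α ≤ 2) :
    ∃ W : ℝ → ℝ, ∃ c : ℝ, 0 < c ∧ ContDiffOn ℝ 2 W (Ioo (-b) b) ∧
      (∀ x ∈ Ioo (-b) b, Function.invFun f c = g (deriv W x) * deriv (deriv W) x) ∧
      Tendsto (deriv W) (𝓝[<] b) atTop ∧ Tendsto (deriv W) (𝓝[>] (-b)) atBot ∧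
      (∀ W' : ℝ → ℝ, ∀ c' : ℝ, 0 < c' → ContDiffOn ℝ 2 W' (Ioo (-b) b) →
        (∀ x ∈ Ioo (-b) b, Function.invFun f c' = g (deriv W' x) * deriv (deriv W') x) →
        Tendsto (deriv W') (𝓝[<] b) atTop → Tendsto (deriv W') (𝓝[>] (-b)) atBot →
        c' = c ∧ ∃ k : ℝ, ∀ x ∈ Ioo (-b) b, W' x = W x + k) ∧
      Tendsto W (𝓝[<] b) atTop ∧ Tendsto W (𝓝[>] (-b)) atTop ∧
      (∃ Dp : ℝ, 0 < Dp ∧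
        Tendsto (fun x => W x / psi ((2 - α) / (α - 1)) (b - x)) (𝓝[<] b) (𝓝 Dp)) ∧
      (∃ Dm : ℝ, 0 < Dm ∧
        Tendsto (fun x => W x / psi ((2 - α) / (α - 1)) (b + x)) (𝓝[>] (-b)) (𝓝 Dm)) := by

  obtain ⟨hfc, hfm, hf0, hftop, hfbot⟩ := hf
  obtain ⟨hgc, hgpos, Cp, Cm, hCp, hCm, hgp, hgm⟩ := hg
  set gn : ℝ → ℝ := fun s => g (-s) with hgn
  have hgnc : Continuous gn := hgc.comp continuous_neg
  have hgnpos : ∀ s, 0 < gn s := fun s => hgpos _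
  have hgnlim : Tendsto (fun s => |s| ^ α * gn s) atTop (𝓝 Cm) := by
    have := hgm.comp tendsto_neg_atTop_atBot
    apply this.congr
    intro s
    simp [hgn, Function.comp, abs_neg]
  have hIp : IntegrableOn g (Ioi (0:ℝ)) := tail_integrable hα1 hCp hgc hgpos hgp
  have hIn : IntegrableOn gn (Ioi (0:ℝ)) := tail_integrable hα1 hCm hgnc hgnpos hgnlim
  set Lp : ℝ := ∫ s in Ioi (0:ℝ), g s with hLp
  set Lm : ℝ := ∫ s in Ioi (0:ℝ), gn s with hLm
  have hLppos : 0 < Lp := by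
    rw [hLp]
    apply (setIntegral_pos_iff_support_of_nonneg_ae (ae_of_all _ fun s => (hgpos s).le) hIp).2
    have : Function.support g = univ := by
      ext s; simp [Function.support, (hgpos s).ne']
    rw [this, univ_inter]
    simp [Real.volume_Ioi]
  have hLmpos : 0 < Lm := by
    rw [hLm]
    apply (setIntegral_pos_iff_support_of_nonneg_ae (ae_of_all _ fun s => (hgnpos s).le) hIn).2
    have : Function.support gn = univ := by
      ext s; simp [Function.support, hgn, (hgpos (-s)).ne']
    rw [this, univ_inter]
    simp [Real.volume_Ioi]
  -- G and Gn
  set G : ℝ → ℝ := fun u => ∫ s in (0:ℝ)..u, g s with hGdef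
  set Gn : ℝ → ℝ := fun u => ∫ s in (0:ℝ)..u, gn s with hGndef
  have hGd : ∀ u, HasDerivAt G (g u) u := by
    intro u
    apply intervalIntegral.integral_hasDerivAt_right
      ((hgc.intervalIntegrable 0 u : IntervalIntegrable g volume 0 u))
    · exact hgc.stronglyMeasurableAtFilter volume (𝓝 u)
    · exact hgc.continuousAt
  have hGneg : ∀ u, G u = - Gn (-u) := by
    intro u
    rw [hGndef]
    simp only
    rw [show (∫ s in (0:ℝ)..(-u), gn s) = ∫ s in (0:ℝ)..(-u), g (-s) from rfl]
    rw [intervalIntegral.integral_comp_neg (a := (0:ℝ)) (b := -u) (f := g)]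
    simp [hGdef]
    rw [← intervalIntegral.integral_symm]
  have hGmono : StrictMono G := by
    intro u₁ u₂ h12
    have hpos : 0 < ∫ s in u₁..u₂, g s :=
      intervalIntegral.intervalIntegral_pos_of_pos (hgc.intervalIntegrable u₁ u₂) hgpos h12
    have hadd := intervalIntegral.integral_add_adjacent_intervals
      (hgc.intervalIntegrable (μ := volume) 0 u₁) (hgc.intervalIntegrable u₁ u₂)
    have : G u₂ = G u₁ + ∫ s in u₁..u₂, g s := by rw [hGdef]; simp only; linarith
    linarith
  have hGtop : Tendsto G atTop (𝓝 Lp) :=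
    intervalIntegral_tendsto_integral_Ioi 0 hIp tendsto_id
  have hGntop : Tendsto Gn atTop (𝓝 Lm) :=
    intervalIntegral_tendsto_integral_Ioi 0 hIn tendsto_id
  have hGbot : Tendsto G atBot (𝓝 (-Lm)) := by
    have h1 : Tendsto (fun u => -Gn (-u)) atBot (𝓝 (-Lm)) :=
      (hGntop.comp tendsto_neg_atBot_atTop).neg
    exact h1.congr fun u => (hGneg u).symm
  have hGlt : ∀ u, G u < Lp := fun u =>
    lt_of_lt_of_le (hGmono (lt_add_one u)) (hGmono.monotone.ge_of_tendsto hGtop (u+1))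
  have hGgt : ∀ u, -Lm < G u := fun u =>
    lt_of_le_of_lt (hGmono.monotone.le_of_tendsto hGbot (u-1)) (hGmono (by linarith))
  have hGcont : Continuous G := by
    apply continuous_iff_continuousAt.2
    exact fun u => (hGd u).continuousAt
  have hGsurj : ∀ y ∈ Ioo (-Lm) Lp, ∃ u, G u = y := by
    intro y hy
    obtain ⟨u₂, hu₂⟩ := (hGtop.eventually (eventually_gt_nhds hy.2)).exists
    obtain ⟨u₁, hu₁⟩ := (hGbot.eventually (eventually_lt_nhds hy.1)).exists
    have h12 : u₁ ≤ u₂ := by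
      by_contra h
      push_neg at h
      exact absurd (hGmono h) (by linarith)
    have : y ∈ Icc (G u₁) (G u₂) := ⟨hu₁.le, hu₂.le⟩
    obtain ⟨u, _, hu⟩ := intermediate_value_Icc h12 hGcont.continuousOn this
    exact ⟨u, hu⟩
  set Ginv : ℝ → ℝ := Function.invFun G with hGinvdef
  have hGinv_right : ∀ y ∈ Ioo (-Lm) Lp, G (Ginv y) = y := fun y hy =>
    Function.invFun_eq (hGsurj y hy)
  have hGinv_left : ∀ u, Ginv (G u) = u := fun u =>
    Function.leftInverse_invFun hGmono.injective u
  have hGinv_cont : ∀ y ∈ Ioo (-Lm) Lp, ContinuousAt Ginv y := by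
    intro y hy
    rw [ContinuousAt]
    apply tendsto_order.2
    constructor
    · intro cc hcc
      have hGc : G cc < y := by
        have := hGmono hcc
        rwa [hGinv_right y hy] at this
      filter_upwards [Ioo_mem_nhds hGc hy.2] with z hz
      by_contra h
      push_neg at h
      have hzmem : z ∈ Ioo (-Lm) Lp := ⟨lt_trans (hGgt cc) hz.1, hz.2⟩
      have : z ≤ G cc := by
        rw [← hGinv_right z hzmem]
        exact hGmono.monotone h
      linarith [hz.1]
    · intro cc hcc
      have hGc : y < G cc := by
        have := hGmono hcc
        rwa [hGinv_right y hy] at this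
      filter_upwards [Ioo_mem_nhds hy.1 hGc] with z hz
      by_contra h
      push_neg at h
      have hzmem : z ∈ Ioo (-Lm) Lp := ⟨hz.1, lt_trans hz.2 (hGlt cc)⟩
      have : G cc ≤ z := by
        rw [← hGinv_right z hzmem]
        exact hGmono.monotone h
      linarith [hz.2]
  have hGinv_deriv : ∀ y ∈ Ioo (-Lm) Lp, HasDerivAt Ginv (g (Ginv y))⁻¹ y := by
    intro y hy
    apply HasDerivAt.of_local_left_inverse (hGinv_cont y hy) (hGd (Ginv y))
      (ne_of_gt (hgpos _))
    filter_upwards [Ioo_mem_nhds hy.1 hy.2] with z hz using hGinv_right z hz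
  have hGinv_top : Tendsto Ginv (𝓝[<] Lp) atTop := by
    rw [tendsto_atTop]
    intro M
    filter_upwards [Ioo_mem_nhdsLT_of_mem (⟨hGlt M, le_refl Lp⟩ : Lp ∈ Ioc (G M) Lp)]
      with y hy
    by_contra h
    push_neg at h
    have hymem : y ∈ Ioo (-Lm) Lp := ⟨lt_trans (hGgt M) hy.1, hy.2⟩
    have : y ≤ G M := by
      rw [← hGinv_right y hymem]
      exact hGmono.monotone h.le
    linarith [hy.1]
  have hGinv_bot : Tendsto Ginv (𝓝[>] (-Lm)) atBot := by
    rw [tendsto_atBot]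
    intro M
    filter_upwards [Ioo_mem_nhdsGT_of_mem (⟨le_refl (-Lm), hGgt M⟩ : -Lm ∈ Ico (-Lm) (G M))]
      with y hy
    by_contra h
    push_neg at h
    have hymem : y ∈ Ioo (-Lm) Lp := ⟨hy.1, lt_trans hy.2 (hGlt M)⟩
    have : G M ≤ y := by
      rw [← hGinv_right y hymem]
      exact hGmono.monotone h.le
    linarith [hy.2]
  -- the constants
  set a : ℝ := (Lp + Lm)/(2*b) with hadef
  have ha : 0 < a := by rw [hadef]; positivity
  set k : ℝ := (Lp - Lm)/2 with hkdef
  have hab_k : a*b + k = Lp := by rw [hadef, hkdef]; field_simp; ring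
  have hab_k' : -(a*b) + k = -Lm := by rw [hadef, hkdef]; field_simp; ring
  have haff : ∀ x ∈ Ioo (-b) b, a*x + k ∈ Ioo (-Lm) Lp := by
    intro x hx
    constructor
    · nlinarith [hx.1]
    · nlinarith [hx.2]
  set v : ℝ → ℝ := fun x => Ginv (a*x + k) with hvdef
  have haffd : ∀ x : ℝ, HasDerivAt (fun x : ℝ => a*x + k) a x := by
    intro x
    simpa using ((hasDerivAt_id x).const_mul a).add_const k
  have hvd : ∀ x ∈ Ioo (-b) b, HasDerivAt v ((g (v x))⁻¹ * a) x := by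
    intro x hx
    exact (hGinv_deriv _ (haff x hx)).comp x (haffd x)
  have hvc : ContinuousOn v (Ioo (-b) b) := fun x hx =>
    ((hvd x hx).continuousAt).continuousWithinAt
  have hGv : ∀ x ∈ Ioo (-b) b, G (v x) = a*x + k := fun x hx =>
    hGinv_right _ (haff x hx)
  -- boundary behaviour of v
  have haffb : Tendsto (fun x => a*x + k) (𝓝[<] b) (𝓝[<] Lp) := by
    rw [tendsto_nhdsWithin_iff]
    constructor
    · have : Tendsto (fun x => a*x + k) (𝓝 b) (𝓝 (a*b + k)) := (haffd b).continuousAt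
      rw [hab_k] at this
      exact this.mono_left nhdsWithin_le_nhds
    · filter_upwards [self_mem_nhdsWithin] with x hx
      have : x < b := hx
      simp only [mem_Iio]
      nlinarith
  have haffb' : Tendsto (fun x => a*x + k) (𝓝[>] (-b)) (𝓝[>] (-Lm)) := by
    rw [tendsto_nhdsWithin_iff]
    constructor
    · have : Tendsto (fun x => a*x + k) (𝓝 (-b)) (𝓝 (a*(-b) + k)) := (haffd (-b)).continuousAt
      rw [show a*(-b) + k = -Lm by linarith [hab_k']] at this
      exact this.mono_left nhdsWithin_le_nhds
    · filter_upwards [self_mem_nhdsWithin] with x hx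
      have : -b < x := hx
      simp only [mem_Ioi]
      nlinarith
  have hvb : Tendsto v (𝓝[<] b) atTop := hGinv_top.comp haffb
  have hvmb : Tendsto v (𝓝[>] (-b)) atBot := hGinv_bot.comp haffb'
  -- W
  have hIooOC : OrdConnected (Ioo (-b) b) := ordConnected_Ioo
  have h0mem : (0:ℝ) ∈ Ioo (-b) b := ⟨by linarith, hb⟩
  have hvint : ∀ p ∈ Ioo (-b) b, ∀ q ∈ Ioo (-b) b, IntervalIntegrable v volume p q := by
    intro p hp q hq
    exact (hvc.mono (hIooOC.uIcc_subset hp hq)).intervalIntegrable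
  set W : ℝ → ℝ := fun x => ∫ t in (0:ℝ)..x, v t with hWdef
  have hWd : ∀ x ∈ Ioo (-b) b, HasDerivAt W (v x) x := by
    intro x hx
    apply intervalIntegral.integral_hasDerivAt_right (hvint 0 h0mem x hx)
    · exact ⟨Ioo (-b) b, Ioo_mem_nhds hx.1 hx.2, hvc.aestronglyMeasurable measurableSet_Ioo⟩
    · exact (hvd x hx).continuousAt
  have hderivW : ∀ x ∈ Ioo (-b) b, deriv W x = v x := fun x hx => (hWd x hx).deriv
  have hWW : ∀ x₁ ∈ Ioo (-b) b, ∀ x₂ ∈ Ioo (-b) b, W x₂ - W x₁ = ∫ t in x₁..x₂, v t := by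
    intro x₁ h1 x₂ h2
    have hadd := intervalIntegral.integral_add_adjacent_intervals
      (hvint 0 h0mem x₁ h1) (hvint x₁ h1 x₂ h2)
    rw [hWdef]
    simp only
    linarith
  -- smoothness
  have hv1 : ContDiffOn ℝ 1 v (Ioo (-b) b) := by
    rw [show (1 : WithTop ℕ∞) = 0 + 1 from rfl, contDiffOn_succ_iff_deriv_of_isOpen isOpen_Ioo]
    refine ⟨fun x hx => (hvd x hx).differentiableAt.differentiableWithinAt, by simp, ?_⟩
    rw [contDiffOn_zero]
    apply ContinuousOn.congr (f := fun x => (g (v x))⁻¹ * a)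
    · exact ((hgc.comp_continuousOn hvc).inv₀ fun x hx => ne_of_gt (hgpos _)).mul
        continuousOn_const
    · intro x hx
      exact (hvd x hx).deriv
  have hWc2 : ContDiffOn ℝ 2 W (Ioo (-b) b) := by
    rw [show (2 : WithTop ℕ∞) = 1 + 1 from rfl, contDiffOn_succ_iff_deriv_of_isOpen isOpen_Ioo]
    refine ⟨fun x hx => (hWd x hx).differentiableAt.differentiableWithinAt, by simp, ?_⟩
    exact hv1.congr hderivW
  -- the equation
  have hdd : ∀ x ∈ Ioo (-b) b, deriv (deriv W) x = (g (v x))⁻¹ * a := by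
    intro x hx
    have heq : deriv W =ᶠ[𝓝 x] v :=
      Filter.eventuallyEq_of_mem (Ioo_mem_nhds hx.1 hx.2) hderivW
    rw [heq.deriv_eq]
    exact (hvd x hx).deriv
  set c : ℝ := f a with hcdef
  have hc : 0 < c := by rw [hcdef, ← hf0]; exact hfm ha
  have hfsurj : Function.Surjective f := hfc.surjective hftop hfbot
  have hfinv_eq : ∀ y, f (Function.invFun f y) = y := fun y => Function.invFun_eq (hfsurj y)
  have hfinv : Function.invFun f c = a := Function.leftInverse_invFun hfm.injective a
  have heqn : ∀ x ∈ Ioo (-b) b, Function.invFun f c = g (deriv W x) * deriv (deriv W) x := by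
    intro x hx
    rw [hfinv, hderivW x hx, hdd x hx]
    field_simp
    rw [div_self (ne_of_gt (hgpos (v x)))]
  have hdWb : Tendsto (deriv W) (𝓝[<] b) atTop := by
    apply hvb.congr'
    filter_upwards [Ioo_mem_nhdsLT_of_mem (⟨by linarith, le_refl b⟩ : b ∈ Ioc (-b) b)]
      with x hx
    exact (hderivW x hx).symm
  have hdWmb : Tendsto (deriv W) (𝓝[>] (-b)) atBot := by
    apply hvmb.congr'
    filter_upwards [Ioo_mem_nhdsGT_of_mem (⟨le_refl (-b), by linarith⟩ : -b ∈ Ico (-b) b)]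
      with x hx
    exact (hderivW x hx).symm
  -- asymptotics at the right end
  set m : ℝ := 1/(α-1) with hmdef
  have hαm : 0 < α - 1 := by linarith
  have hm : 1 ≤ m := by
    rw [hmdef, le_div_iff₀ hαm]; linarith
  have hγm : (2-α)/(α-1) = m - 1 := by
    rw [hmdef]; field_simp; ring
  have hIoiEq : ∀ x ∈ Ioo (-b) b, 0 ≤ v x → ∫ s in Ioi (v x), g s = a*(b-x) := by
    intro x hx hvx
    have h1 := tail_eq hIp hvx
    have h2 : G (v x) = a*x + k := hGv x hx
    have h3 : (∫ s in (0:ℝ)..(v x), g s) = G (v x) := rfl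
    rw [h3, h2] at h1
    rw [← h1, ← hLp]
    nlinarith [hab_k]
  have hcompP : Tendsto (fun x => (v x) ^ (α-1) * (a*(b-x))) (𝓝[<] b) (𝓝 (Cp/(α-1))) := by
    have h0 := (tail_ratio hα1 hCp hgc hgpos hgp).comp hvb
    apply h0.congr'
    filter_upwards [hvb.eventually (eventually_ge_atTop 0),
      Ioo_mem_nhdsLT_of_mem (⟨by linarith, le_refl b⟩ : b ∈ Ioc (-b) b)] with x h1 h2
    simp only [Function.comp]
    rw [hIoiEq x h2 h1]
  set Kp : ℝ := (Cp/(a*(α-1))) ^ m with hKpdef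
  have hKppos : 0 < Kp := by
    rw [hKpdef]; apply Real.rpow_pos_of_pos; positivity
  have hKb : Tendsto (fun x => v x * (b-x) ^ m) (𝓝[<] b) (𝓝 Kp) := by
    have hlim0 : (0:ℝ) < Cp/(α-1)/a := by positivity
    have h1 := (hcompP.div_const a).rpow_const (p := m) (Or.inl (ne_of_gt hlim0))
    have h2 : (Cp/(α-1)/a) ^ m = Kp := by
      rw [hKpdef, div_div, mul_comm]
    rw [h2] at h1
    apply h1.congr'
    filter_upwards [hvb.eventually (eventually_gt_atTop 0),
      Ioo_mem_nhdsLT_of_mem (⟨by linarith, le_refl b⟩ : b ∈ Ioc (-b) b)] with x h3 h4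
    have hbx : (0:ℝ) ≤ b - x := by linarith [h4.2]
    rw [show (v x) ^ (α-1) * (a*(b-x)) = ((v x) ^ (α-1) * (b-x)) * a by ring,
      mul_div_cancel_right₀ _ (ne_of_gt ha)]
    rw [Real.mul_rpow (Real.rpow_nonneg h3.le _) hbx]
    rw [← Real.rpow_mul h3.le]
    rw [show (α-1) * m = 1 by rw [hmdef]; field_simp]
    rw [Real.rpow_one]
  have hsideP := side_asym hb hm hKppos hvc hWW hKb
  have hWb_top : Tendsto W (𝓝[<] b) atTop := hsideP.2
  have hifpos : 0 < (if 1 < m then m - 1 else 1) := by split <;> [linarith; norm_num]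
  have hDp : Tendsto (fun x => W x / psi ((2-α)/(α-1)) (b-x)) (𝓝[<] b)
      (𝓝 (Kp / (if 1 < m then m-1 else 1))) := by
    simp only [hγm]
    exact hsideP.1
  -- left end via reflection
  set vn : ℝ → ℝ := fun x => -(v (-x)) with hvndef
  set Wn : ℝ → ℝ := fun x => W (-x) with hWndef
  have hmaps : ∀ x ∈ Ioo (-b) b, -x ∈ Ioo (-b) b := fun x hx =>
    ⟨by linarith [hx.2], by linarith [hx.1]⟩
  have hnegmap : Tendsto (fun x : ℝ => -x) (𝓝[<] b) (𝓝[>] (-b)) := by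
    rw [tendsto_nhdsWithin_iff]
    constructor
    · exact (continuous_neg.tendsto b).mono_left nhdsWithin_le_nhds
    · filter_upwards [self_mem_nhdsWithin] with x hx
      have : x < b := hx
      simp only [mem_Ioi]; linarith
  have hnegmap' : Tendsto (fun x : ℝ => -x) (𝓝[>] (-b)) (𝓝[<] b) := by
    rw [tendsto_nhdsWithin_iff]
    constructor
    · have := (continuous_neg.tendsto (-b)).mono_left (nhdsWithin_le_nhds (s := Ioi (-b)))
      rwa [neg_neg] at this
    · filter_upwards [self_mem_nhdsWithin] with x hx
      have : -b < x := hx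
      simp only [mem_Iio]; linarith
  have hvnc : ContinuousOn vn (Ioo (-b) b) := by
    apply ContinuousOn.neg
    exact hvc.comp continuous_neg.continuousOn hmaps
  have hWWn : ∀ x₁ ∈ Ioo (-b) b, ∀ x₂ ∈ Ioo (-b) b, Wn x₂ - Wn x₁ = ∫ t in x₁..x₂, vn t := by
    intro x₁ h1 x₂ h2
    have h3 := hWW (-x₁) (hmaps x₁ h1) (-x₂) (hmaps x₂ h2)
    have h4 : ∫ t in x₁..x₂, vn t = ∫ t in (-x₁)..(-x₂), v t := by
      rw [hvndef]
      simp only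
      rw [intervalIntegral.integral_neg, intervalIntegral.integral_comp_neg,
        ← intervalIntegral.integral_symm]
    rw [h4, hWndef]
    simp only
    linarith
  have hvnb : Tendsto vn (𝓝[<] b) atTop := by
    have := tendsto_neg_atBot_atTop.comp (hvmb.comp hnegmap)
    exact this
  have hIoiEqn : ∀ x ∈ Ioo (-b) b, 0 ≤ vn x → ∫ s in Ioi (vn x), gn s = a*(b-x) := by
    intro x hx hvx
    have h1 := tail_eq hIn hvx
    have h2 : G (v (-x)) = a*(-x) + k := hGv (-x) (hmaps x hx)
    have h3 : (∫ s in (0:ℝ)..(vn x), gn s) = Gn (vn x) := rfl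
    have h4 : Gn (vn x) = - G (v (-x)) := by
      have := hGneg (v (-x))
      rw [hvndef]
      simp only
      linarith [this]
    rw [h3, h4, h2] at h1
    rw [← h1, ← hLm]
    nlinarith [hab_k']
  have hcompM : Tendsto (fun x => (vn x) ^ (α-1) * (a*(b-x))) (𝓝[<] b) (𝓝 (Cm/(α-1))) := by
    have h0 := (tail_ratio hα1 hCm hgnc hgnpos hgnlim).comp hvnb
    apply h0.congr'
    filter_upwards [hvnb.eventually (eventually_ge_atTop 0),
      Ioo_mem_nhdsLT_of_mem (⟨by linarith, le_refl b⟩ : b ∈ Ioc (-b) b)] with x h1 h2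
    simp only [Function.comp]
    rw [hIoiEqn x h2 h1]
  set Km : ℝ := (Cm/(a*(α-1))) ^ m with hKmdef
  have hKmpos : 0 < Km := by
    rw [hKmdef]; apply Real.rpow_pos_of_pos; positivity
  have hKbn : Tendsto (fun x => vn x * (b-x) ^ m) (𝓝[<] b) (𝓝 Km) := by
    have hlim0 : (0:ℝ) < Cm/(α-1)/a := by positivity
    have h1 := (hcompM.div_const a).rpow_const (p := m) (Or.inl (ne_of_gt hlim0))
    have h2 : (Cm/(α-1)/a) ^ m = Km := by
      rw [hKmdef, div_div, mul_comm]
    rw [h2] at h1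
    apply h1.congr'
    filter_upwards [hvnb.eventually (eventually_gt_atTop 0),
      Ioo_mem_nhdsLT_of_mem (⟨by linarith, le_refl b⟩ : b ∈ Ioc (-b) b)] with x h3 h4
    have hbx : (0:ℝ) ≤ b - x := by linarith [h4.2]
    rw [show (vn x) ^ (α-1) * (a*(b-x)) = ((vn x) ^ (α-1) * (b-x)) * a by ring,
      mul_div_cancel_right₀ _ (ne_of_gt ha)]
    rw [Real.mul_rpow (Real.rpow_nonneg h3.le _) hbx]
    rw [← Real.rpow_mul h3.le]
    rw [show (α-1) * m = 1 by rw [hmdef]; field_simp]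
    rw [Real.rpow_one]
  have hsideM := side_asym hb hm hKmpos hvnc hWWn hKbn
  have hWmb_top : Tendsto W (𝓝[>] (-b)) atTop := by
    have := hsideM.2.comp hnegmap'
    apply this.congr
    intro x
    simp [hWndef, Function.comp]
  have hDm : Tendsto (fun x => W x / psi ((2-α)/(α-1)) (b+x)) (𝓝[>] (-b))
      (𝓝 (Km / (if 1 < m then m-1 else 1))) := by
    simp only [hγm]
    have := hsideM.1.comp hnegmap'
    apply this.congr
    intro x
    simp only [Function.comp, hWndef, neg_neg, sub_neg_eq_add]
  -- uniqueness
  have huniq : ∀ W' : ℝ → ℝ, ∀ c' : ℝ, 0 < c' → ContDiffOn ℝ 2 W' (Ioo (-b) b) →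
      (∀ x ∈ Ioo (-b) b, Function.invFun f c' = g (deriv W' x) * deriv (deriv W') x) →
      Tendsto (deriv W') (𝓝[<] b) atTop → Tendsto (deriv W') (𝓝[>] (-b)) atBot →
      c' = c ∧ ∃ kk : ℝ, ∀ x ∈ Ioo (-b) b, W' x = W x + kk := by
    intro W' c' hc' hW2 heq' htb htmb
    set a' : ℝ := Function.invFun f c' with ha'def
    have hfa' : f a' = c' := hfinv_eq c'
    have hd1 : ContDiffOn ℝ 1 (deriv W') (Ioo (-b) b) :=
      hW2.deriv_of_isOpen isOpen_Ioo (by norm_num)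
    have hW'd : ∀ x ∈ Ioo (-b) b, HasDerivAt W' (deriv W' x) x := fun x hx =>
      ((hW2.differentiableOn (by norm_num)).differentiableAt (Ioo_mem_nhds hx.1 hx.2)).hasDerivAt
    have hvd' : ∀ x ∈ Ioo (-b) b, HasDerivAt (deriv W') (deriv (deriv W') x) x := fun x hx =>
      ((hd1.differentiableOn (by norm_num)).differentiableAt (Ioo_mem_nhds hx.1 hx.2)).hasDerivAt
    set F : ℝ → ℝ := fun x => G (deriv W' x) - a' * x with hFdef
    have hF0 : ∀ x ∈ Ioo (-b) b, HasDerivAt F 0 x := by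
      intro x hx
      have h1 := (hGd (deriv W' x)).comp x (hvd' x hx)
      have h2 := h1.sub ((hasDerivAt_id x).const_mul a')
      have h3 := heq' x hx
      rw [hFdef]
      refine h2.congr_deriv ?_
      rw [mul_one, ← h3]
      ring
    have hFc := const_of_deriv0 hF0
    set k' : ℝ := G (deriv W' 0) with hk'def
    have hFx : ∀ x ∈ Ioo (-b) b, G (deriv W' x) = a' * x + k' := by
      intro x hx
      have h5 := hFc x hx 0 h0mem
      simp only [hFdef] at h5
      rw [hk'def]
      linarith
    have hlim1 : a' * b + k' = Lp := by
      have h1 : Tendsto (fun x => a' * x + k') (𝓝[<] b) (𝓝 (a' * b + k')) := by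
        have : Tendsto (fun x => a' * x + k') (𝓝 b) (𝓝 (a' * b + k')) := by
          apply Tendsto.add _ tendsto_const_nhds
          exact (tendsto_id.const_mul a')
        exact this.mono_left nhdsWithin_le_nhds
      have h2 : Tendsto (fun x => G (deriv W' x)) (𝓝[<] b) (𝓝 Lp) := hGtop.comp htb
      have h3 : (fun x => G (deriv W' x)) =ᶠ[𝓝[<] b] (fun x => a' * x + k') := by
        filter_upwards [Ioo_mem_nhdsLT_of_mem (⟨by linarith, le_refl b⟩ : b ∈ Ioc (-b) b)]
          with x hx using hFx x hx
      exact tendsto_nhds_unique h1 (h2.congr' h3)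
    have hlim2 : a' * (-b) + k' = -Lm := by
      have h1 : Tendsto (fun x => a' * x + k') (𝓝[>] (-b)) (𝓝 (a' * (-b) + k')) := by
        have : Tendsto (fun x => a' * x + k') (𝓝 (-b)) (𝓝 (a' * (-b) + k')) := by
          apply Tendsto.add _ tendsto_const_nhds
          exact (tendsto_id.const_mul a')
        exact this.mono_left nhdsWithin_le_nhds
      have h2 : Tendsto (fun x => G (deriv W' x)) (𝓝[>] (-b)) (𝓝 (-Lm)) := hGbot.comp htmb
      have h3 : (fun x => G (deriv W' x)) =ᶠ[𝓝[>] (-b)] (fun x => a' * x + k') := by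
        filter_upwards [Ioo_mem_nhdsGT_of_mem (⟨le_refl (-b), by linarith⟩ : -b ∈ Ico (-b) b)]
          with x hx using hFx x hx
      exact tendsto_nhds_unique h1 (h2.congr' h3)
    have ha'a : a' = a := by
      have hprod : a' * b = a * b := by linarith [hab_k, hab_k']
      exact mul_right_cancel₀ (ne_of_gt hb) hprod
    have hk'k : k' = k := by
      have hab2 : a' * b = a * b := by rw [ha'a]
      linarith [hab_k]
    constructor
    · rw [← hfa', ha'a, hcdef]
    · refine ⟨W' 0 - W 0, ?_⟩
      have hvv' : ∀ x ∈ Ioo (-b) b, deriv W' x = v x := by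
        intro x hx
        apply hGmono.injective
        rw [hFx x hx, hGv x hx, ha'a, hk'k]
      have hdiff0 : ∀ x ∈ Ioo (-b) b, HasDerivAt (fun y => W' y - W y) 0 x := by
        intro x hx
        have hsd := (hW'd x hx).sub (hWd x hx)
        rwa [hvv' x hx, sub_self] at hsd
      intro x hx
      have := const_of_deriv0 hdiff0 x hx 0 h0mem
      linarith
  refine ⟨W, c, hc, hWc2, heqn, hdWb, hdWmb, huniq, hWb_top, hWmb_top,
    ⟨Kp / (if 1 < m then m-1 else 1), div_pos hKppos hifpos, hDp⟩,
    ⟨Km / (if 1 < m then m-1 else 1), div_pos hKmpos hifpos, hDm⟩⟩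
end
end

section
/- Let b>0 and assume f,g∈C(ℝ) satisfy (A1) and (A2) with exponent α ≤ 1. Then there is no pair (W,c)∈C²((−b,b))×(0,∞) satisfying f^{−1}(c) = g(W′(x))W″(x) for all x∈(−b,b) together with lim_{x→b}W′(x)=+∞ and lim_{x→−b}W′(x)=−∞. -/
open Filter Set Topology

noncomputable section

/-- non-existence of traveling wave profiles for `α ≤ 1`
(Proposition A.1 (b)). -/
theorem travelingWave_nonexists (b α : ℝ) (f g : ℝ → ℝ)
    (hb : 0 < b) (hf : A1 f) (hg : A2 g α) (hα : α ≤ 1) :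
    ¬ ∃ W : ℝ → ℝ, ∃ c : ℝ, 0 < c ∧ ContDiffOn ℝ 2 W (Ioo (-b) b) ∧
      (∀ x ∈ Ioo (-b) b, Function.invFun f c = g (deriv W x) * deriv (deriv W) x) ∧
      Tendsto (deriv W) (𝓝[<] b) atTop ∧ Tendsto (deriv W) (𝓝[>] (-b)) atBot := by
  rintro ⟨W, c, hc, hW, heq, htop, -⟩
  obtain ⟨hfc, hfm, hf0, hftop, hfbot⟩ := hf
  obtain ⟨hgc, hgpos, Cgp, Cgm, hCgp, hCgm, hgtop, hgbot⟩ := hg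
  set k := Function.invFun f c with hk
  have hfk : f k = c := Function.invFun_eq ((hfc.surjective hftop hfbot) c)
  have hkpos : 0 < k := by
    by_contra h
    push_neg at h
    have := hfm.monotone h
    rw [hf0, hfk] at this
    linarith
  set V := deriv W with hV
  have hVd : ContDiffOn ℝ 1 V (Ioo (-b) b) :=
    hW.deriv_of_isOpen isOpen_Ioo (by norm_num)
  have hVdiff : ∀ x ∈ Ioo (-b) b, HasDerivAt V (deriv V x) x := fun x hx =>
    ((hVd.differentiableOn one_ne_zero).differentiableAt (isOpen_Ioo.mem_nhds hx)).hasDerivAt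
  set G := fun s => ∫ t in (0:ℝ)..s, g t with hG
  have hGderiv : ∀ s : ℝ, HasDerivAt G (g s) s := fun s =>
    intervalIntegral.integral_hasDerivAt_right (hgc.intervalIntegrable _ _)
      (hgc.stronglyMeasurableAtFilter _ _) hgc.continuousAt
  set h : ℝ → ℝ := fun x => G (V x) - k * x with hh
  have hhderiv : ∀ x ∈ Ioo (-b) b, HasDerivAt h 0 x := by
    intro x hx
    have h1 := hVdiff x hx
    have h2 : HasDerivAt (fun y => G (V y)) (g (V x) * deriv V x) x :=
      (hGderiv (V x)).comp x h1
    have h3 : HasDerivAt h (g (V x) * deriv V x - k * 1) x :=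
      h2.sub ((hasDerivAt_id x).const_mul k)
    have h4 := (heq x hx).symm
    simpa [h4] using h3
  -- h is constant on Ioo (-b) b
  have hconst : ∀ x ∈ Ioo (-b) b, h x = h 0 := by
    have h0mem : (0:ℝ) ∈ Ioo (-b) b := ⟨by linarith, hb⟩
    have hcont : ContinuousOn h (Ioo (-b) b) := fun x hx =>
      ((hhderiv x hx).continuousAt).continuousWithinAt
    have hdiff : DifferentiableOn ℝ h (interior (Ioo (-b) b)) := by
      rw [interior_Ioo]
      exact fun x hx => ((hhderiv x hx).differentiableAt).differentiableWithinAt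
    have hz : ∀ x ∈ interior (Ioo (-b) b), deriv h x = 0 := by
      rw [interior_Ioo]
      exact fun x hx => (hhderiv x hx).deriv
    have hmono : MonotoneOn h (Ioo (-b) b) :=
      monotoneOn_of_deriv_nonneg (convex_Ioo _ _) hcont hdiff (fun x hx => (hz x hx).ge)
    have hanti : AntitoneOn h (Ioo (-b) b) :=
      antitoneOn_of_deriv_nonpos (convex_Ioo _ _) hcont hdiff (fun x hx => (hz x hx).le)
    intro x hx
    rcases le_total x 0 with hx0 | hx0
    · exact le_antisymm (hmono hx h0mem hx0) (hanti hx h0mem hx0)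
    · exact le_antisymm (hanti h0mem hx hx0) (hmono h0mem hx hx0)
  -- G tends to atTop
  have hGtop : Tendsto G atTop atTop := by
    obtain ⟨N, hN⟩ := (atTop_basis.eventually_iff.1
      ((hgtop.eventually (lt_mem_nhds (by linarith : Cgp/2 < Cgp))).and
        (eventually_ge_atTop (1:ℝ))))
    set s0 := max N 1 with hs0
    have hs0' : ∀ s ≥ s0, Cgp/2 < |s| ^ α * g s ∧ 1 ≤ s := fun s hs =>
      hN.2 (le_trans (le_max_left _ _) hs)
    have hs01 : (1:ℝ) ≤ s0 := le_max_right _ _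
    have key : ∀ s ≥ s0, G s0 + Cgp/2 * (Real.log s - Real.log s0) ≤ G s := by
      intro s hs
      have hbound : ∀ t ∈ Icc s0 s, Cgp/2 * (1/t) ≤ g t := by
        intro t ht
        obtain ⟨h1, h2⟩ := hs0' t ht.1
        have ht0 : (0:ℝ) < t := by linarith
        have hta : t ^ α ≤ t := by
          calc t ^ α ≤ t ^ (1:ℝ) := Real.rpow_le_rpow_of_exponent_le h2 hα
          _ = t := Real.rpow_one t
        have : Cgp/2 ≤ t * g t := by
          have := h1.le
          rw [abs_of_pos ht0] at this
          calc Cgp/2 ≤ t ^ α * g t := this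
          _ ≤ t * g t := mul_le_mul_of_nonneg_right hta (hgpos t).le
        rw [mul_one_div, div_le_iff₀ ht0, mul_comm (g t) t]
        exact this
      have hint1 : IntervalIntegrable (fun t => Cgp/2 * (1/t)) MeasureTheory.volume s0 s := by
        apply ContinuousOn.intervalIntegrable
        apply ContinuousOn.mul continuousOn_const
        apply ContinuousOn.div continuousOn_const continuousOn_id
        intro t ht
        rw [uIcc_of_le hs] at ht
        have : (0:ℝ) < t := lt_of_lt_of_le (by linarith) ht.1
        exact ne_of_gt this
      have hint2 : IntervalIntegrable g MeasureTheory.volume s0 s :=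
        hgc.intervalIntegrable _ _
      have hmono := intervalIntegral.integral_mono_on hs hint1 hint2 hbound
      have hlog : ∫ t in s0..s, Cgp/2 * (1/t) = Cgp/2 * (Real.log s - Real.log s0) := by
        rw [intervalIntegral.integral_const_mul, integral_one_div, Real.log_div
          (by linarith) (by linarith)]
        rw [uIcc_of_le hs]
        intro h0
        have := h0.1
        linarith
      have hadd : G s0 + ∫ t in s0..s, g t = G s := by
        exact intervalIntegral.integral_add_adjacent_intervals
          (hgc.intervalIntegrable _ _) (hgc.intervalIntegrable _ _)
      linarith [hlog ▸ hmono]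
    apply tendsto_atTop_mono' atTop (eventually_atTop.2 ⟨s0, key⟩)
    apply tendsto_atTop_add_const_left
    apply Tendsto.const_mul_atTop (by linarith : (0:ℝ) < Cgp/2)
    exact tendsto_atTop_add_const_right _ _ Real.tendsto_log_atTop
  -- contradiction
  have hcomp : Tendsto (fun x => G (V x)) (𝓝[<] b) atTop := hGtop.comp htop
  have hmem : Ioo (-b) b ∈ 𝓝[<] b := Ioo_mem_nhdsLT_of_mem ⟨by linarith, le_refl b⟩
  have : ∀ᶠ x in 𝓝[<] b, k * b + h 0 < G (V x) ∧ x ∈ Ioo (-b) b :=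
    (hcomp.eventually_gt_atTop _).and hmem
  obtain ⟨x, hx1, hx2⟩ := this.exists
  have hhx := hconst x hx2
  have : G (V x) = k * x + h 0 := by
    have : G (V x) - k * x = h 0 := hhx
    linarith
  have hxb : x < b := hx2.2
  nlinarith
end
end
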